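/- arXiv:2304.09496 — 4 statements merged into one kernel-verified Lean document; each statement's English description precedes it below -/
import Mathlib

section
/- Let d, m ∈ ℕ with d, m ≥ 1 and let A, B_1, …, B_m be real d×d matrices. Let p ≥ 2 and T > 0. Then there exist constants κ₁, κ₂ > 0, depending only on p, ‖A‖ and ‖B_1‖,…,‖B_m‖ (in particular independent of t − s), such that for all 0 ≤ s < t ≤ T, if Z_1, …, Z_m are independent real-valued Gaussian random variables each with mean 0 and variance t − s, and S := exp((A − (1/2) Σ_{i=1}^m B_i²)(t − s) + Σ_{i=1}^m Z_i B_i), then 𝔼[‖S‖^p] ≤ κ₁ exp(κ₂ (t − s)). -/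
open MeasureTheory ProbabilityTheory
open scoped NNReal ENNReal

noncomputable section

set_option maxHeartbeats 1000000 in
lemma aux_norm_exp_le {𝔸 : Type*} [NormedRing 𝔸] [NormOneClass 𝔸] [NormedAlgebra ℝ 𝔸]
    [CompleteSpace 𝔸] (x : 𝔸) : ‖NormedSpace.exp x‖ ≤ Real.exp ‖x‖ := by
  rw [Real.exp_eq_exp_ℝ, NormedSpace.exp_eq_tsum (𝕂 := ℝ), NormedSpace.exp_eq_tsum (𝕂 := ℝ)]
  refine (norm_tsum_le_tsum_norm (NormedSpace.norm_expSeries_summable' x)).trans ?_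
  refine Summable.tsum_le_tsum (fun n => ?_) (NormedSpace.norm_expSeries_summable' x)
    (NormedSpace.expSeries_summable' (𝕂 := ℝ) ‖x‖)
  rw [norm_smul, smul_eq_mul, norm_inv, Real.norm_natCast]
  exact mul_le_mul_of_nonneg_left (norm_pow_le x n) (by positivity)

lemma aux_gaussian_mgf (c : ℝ) {v : ℝ≥0} (hv : v ≠ 0) :
    ∫⁻ x, ENNReal.ofReal (Real.exp (c * x)) ∂(gaussianReal 0 v)
      = ENNReal.ofReal (Real.exp (c ^ 2 * v / 2)) := by
  have hv' : (0:ℝ) < v := NNReal.coe_pos.mpr (pos_iff_ne_zero.mpr hv)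
  have key : ∀ x : ℝ, gaussianPDFReal 0 v x * Real.exp (c * x)
      = Real.exp (c ^ 2 * v / 2) * gaussianPDFReal (c * v) v x := by
    intro x
    simp only [gaussianPDFReal, sub_zero]
    rw [mul_assoc, ← Real.exp_add, mul_left_comm, mul_assoc, ← Real.exp_add]
    congr 2
    field_simp
    ring
  rw [gaussianReal_of_var_ne_zero _ hv,
    lintegral_withDensity_eq_lintegral_mul _ (measurable_gaussianPDF 0 v)
      (by fun_prop)]
  simp_rw [Pi.mul_apply, gaussianPDF, ← ENNReal.ofReal_mul (gaussianPDFReal_nonneg 0 v _), key,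
    ENNReal.ofReal_mul (Real.exp_nonneg _)]
  have hfold : ∀ a, ENNReal.ofReal (gaussianPDFReal (c * ↑v) v a) = gaussianPDF (c * ↑v) v a :=
    fun a => rfl
  simp_rw [hfold]
  rw [lintegral_const_mul _ (measurable_gaussianPDF _ v), lintegral_gaussianPDF_eq_one _ hv,
    mul_one]

lemma aux_exp_sum_le_avg {m : ℕ} (hm : 1 ≤ m) (a : Fin m → ℝ) :
    Real.exp (∑ i, a i) ≤ (m : ℝ)⁻¹ * ∑ i, Real.exp (m * a i) := by
  have hm0 : (0:ℝ) < m := by exact_mod_cast hm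
  have h := convexOn_exp.map_sum_le (t := Finset.univ) (w := fun _ : Fin m => (m:ℝ)⁻¹)
    (p := fun i => (m:ℝ) * a i) (fun i _ => by positivity)
    (by simp [Finset.card_univ]; field_simp) (fun i _ => Set.mem_univ _)
  simp only [smul_eq_mul, ← mul_assoc, inv_mul_cancel₀ hm0.ne', one_mul] at h
  rw [Finset.mul_sum]
  exact h


/-- The GBM solution operator `S(h, w) = exp((A − ½ Σᵢ Bᵢ²) h + Σᵢ wᵢ Bᵢ)`. -/
def gbmOp {d m : ℕ} (A : EuclideanSpace ℝ (Fin d) →L[ℝ] EuclideanSpace ℝ (Fin d))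
    (B : Fin m → (EuclideanSpace ℝ (Fin d) →L[ℝ] EuclideanSpace ℝ (Fin d)))
    (h : ℝ) (w : Fin m → ℝ) : EuclideanSpace ℝ (Fin d) →L[ℝ] EuclideanSpace ℝ (Fin d) :=
  NormedSpace.exp (h • (A - (1 / 2 : ℝ) • ∑ i, B i ^ 2) + ∑ i, w i • B i)

set_option maxHeartbeats 2000000 in
/-- Moment bound for the (operator norm of the) GBM operator: there exist
constants `κ₁, κ₂ > 0`, independent of `t − s`, with `𝔼‖S(t,s)‖ᵖ ≤ κ₁ exp(κ₂ (t − s))`. -/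
theorem gbm_operator_norm_moment_bound {d m : ℕ} (hd : 1 ≤ d) (hm : 1 ≤ m)
    (A : EuclideanSpace ℝ (Fin d) →L[ℝ] EuclideanSpace ℝ (Fin d))
    (B : Fin m → (EuclideanSpace ℝ (Fin d) →L[ℝ] EuclideanSpace ℝ (Fin d)))
    (p T : ℝ) (hp : 2 ≤ p) (hT : 0 < T) :
    ∃ κ₁ κ₂ : ℝ, 0 < κ₁ ∧ 0 < κ₂ ∧
      ∀ (s t : ℝ), 0 ≤ s → s < t → t ≤ T →
      ∀ (Ω : Type) (mΩ : MeasurableSpace Ω) (P : Measure Ω), IsProbabilityMeasure P →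
      ∀ (Z : Fin m → Ω → ℝ), (∀ i, Measurable (Z i)) →
        iIndepFun Z P →
        (∀ i, Measure.map (Z i) P = gaussianReal 0 ((t - s).toNNReal)) →
        ∫⁻ ω, (‖gbmOp A B (t - s) (fun i => Z i ω)‖₊ : ℝ≥0∞) ^ p ∂P
          ≤ ENNReal.ofReal (κ₁ * Real.exp (κ₂ * (t - s))) := by
  have hp0 : (0:ℝ) < p := lt_of_lt_of_le two_pos hp
  set C : ℝ := ‖A - (1 / 2 : ℝ) • ∑ i, B i ^ 2‖ with hCdef
  set β : ℝ := ∑ i, ‖B i‖ with hβdef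
  set c : ℝ := (m : ℝ) * (p * β) with hcdef
  have hC0 : 0 ≤ C := norm_nonneg _
  have hβ0 : 0 ≤ β := Finset.sum_nonneg fun i _ => norm_nonneg _
  have hc0 : 0 ≤ c := mul_nonneg (Nat.cast_nonneg m) (mul_nonneg hp0.le hβ0)
  refine ⟨2, p * C + c ^ 2 / 2 + 1, two_pos, by nlinarith [mul_nonneg hp0.le hC0, sq_nonneg c], ?_⟩
  intro s t hs hst htT Ω mΩ P hP Z hZm _hind hZ
  have hh : 0 < t - s := sub_pos.mpr hst
  set v : ℝ≥0 := (t - s).toNNReal with hvdef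
  have hv0 : v ≠ 0 := by
    simp only [hvdef, ne_eq, Real.toNNReal_eq_zero, not_le]
    exact hh
  have hvr : (v : ℝ) = t - s := Real.coe_toNNReal _ hh.le
  haveI : Nontrivial (EuclideanSpace ℝ (Fin d)) := by
    haveI : Nonempty (Fin d) := Fin.pos_iff_nonempty.mp hd
    exact inferInstanceAs (Nontrivial (PiLp 2 fun _ : Fin d => ℝ))
  set K : ℝ := Real.exp (p * (C * (t - s))) with hKdef
  have hK0 : 0 ≤ K := Real.exp_nonneg _
  have hKm : 0 ≤ K * (m:ℝ)⁻¹ := by positivity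
  -- pointwise bound
  have hpt : ∀ ω, (‖gbmOp A B (t - s) (fun i => Z i ω)‖₊ : ℝ≥0∞) ^ p
      ≤ ENNReal.ofReal (K * ((m:ℝ)⁻¹ * ∑ i, Real.exp (c * |Z i ω|))) := by
    intro ω
    set w : Fin m → ℝ := fun i => Z i ω with hwdef
    have h1 : ‖(t - s) • (A - (1 / 2 : ℝ) • ∑ i, B i ^ 2) + ∑ i, w i • B i‖
        ≤ C * (t - s) + ∑ i, β * |w i| := by
      refine (norm_add_le _ _).trans (add_le_add ?_ ?_)
      · refine (ContinuousLinearMap.opNorm_smul_le _ _).trans (le_of_eq ?_)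
        rw [Real.norm_eq_abs, abs_of_pos hh, mul_comm]
      · refine (norm_sum_le _ _).trans (Finset.sum_le_sum fun i _ => ?_)
        refine (ContinuousLinearMap.opNorm_smul_le _ _).trans ?_
        rw [Real.norm_eq_abs, mul_comm]
        exact mul_le_mul_of_nonneg_right
          (Finset.single_le_sum (fun j _ => norm_nonneg (B j)) (Finset.mem_univ i))
          (abs_nonneg _)
    have h2 : ‖gbmOp A B (t - s) w‖ ≤ Real.exp (C * (t - s) + ∑ i, β * |w i|) := by
      refine le_trans ?_ (Real.exp_le_exp.mpr h1)
      exact aux_norm_exp_le _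
    have h3 : ‖gbmOp A B (t - s) w‖ ^ p
        ≤ K * ((m:ℝ)⁻¹ * ∑ i, Real.exp (c * |w i|)) := by
      have e1 : ‖gbmOp A B (t - s) w‖ ^ p
          ≤ Real.exp (C * (t - s) + ∑ i, β * |w i|) ^ p :=
        Real.rpow_le_rpow (norm_nonneg _) h2 hp0.le
      rw [← Real.exp_mul] at e1
      have harg : (C * (t - s) + ∑ i, β * |w i|) * p
          = p * (C * (t - s)) + ∑ i, (p * β) * |w i| := by
        rw [add_mul, Finset.sum_mul]
        refine congrArg₂ (· + ·) (by ring) (Finset.sum_congr rfl fun i _ => by ring)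
      rw [harg, Real.exp_add] at e1
      refine e1.trans (mul_le_mul_of_nonneg_left ?_ hK0)
      have := aux_exp_sum_le_avg hm (fun i => (p * β) * |w i|)
      refine this.trans (le_of_eq ?_)
      refine congrArg _ (Finset.sum_congr rfl fun i _ => ?_)
      rw [hcdef]; ring_nf
    calc (‖gbmOp A B (t - s) w‖₊ : ℝ≥0∞) ^ p
        = ENNReal.ofReal (‖gbmOp A B (t - s) w‖ ^ p) := by
          rw [← enorm_eq_nnnorm, ← ofReal_norm (gbmOp A B (t - s) w),
            ENNReal.ofReal_rpow_of_nonneg (norm_nonneg _) hp0.le]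
      _ ≤ _ := ENNReal.ofReal_le_ofReal h3
  refine le_trans (lintegral_mono hpt) ?_
  have hmeas : ∀ i : Fin m, Measurable fun ω => ENNReal.ofReal (Real.exp (c * |Z i ω|)) :=
    fun i => (((hZm i).abs.const_mul c).exp).ennreal_ofReal
  have step : (∫⁻ ω, ENNReal.ofReal (K * ((m:ℝ)⁻¹ * ∑ i, Real.exp (c * |Z i ω|))) ∂P)
      = ENNReal.ofReal (K * (m:ℝ)⁻¹)
        * ∑ i, ∫⁻ ω, ENNReal.ofReal (Real.exp (c * |Z i ω|)) ∂P := by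
    simp_rw [← mul_assoc, ENNReal.ofReal_mul hKm,
      ENNReal.ofReal_sum_of_nonneg (fun i _ => Real.exp_nonneg _)]
    rw [lintegral_const_mul _ (Finset.measurable_sum _ fun i _ => hmeas i),
      lintegral_finset_sum _ fun i _ => hmeas i]
  have each : ∀ i : Fin m, (∫⁻ ω, ENNReal.ofReal (Real.exp (c * |Z i ω|)) ∂P)
      ≤ 2 * ENNReal.ofReal (Real.exp (c ^ 2 * v / 2)) := by
    intro i
    have hmap : (∫⁻ ω, ENNReal.ofReal (Real.exp (c * |Z i ω|)) ∂P)
        = ∫⁻ x, ENNReal.ofReal (Real.exp (c * |x|)) ∂(gaussianReal 0 v) := by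
      rw [← hZ i, lintegral_map ((measurable_abs.const_mul c).exp.ennreal_ofReal) (hZm i)]
    rw [hmap]
    have hbd : ∀ x : ℝ, ENNReal.ofReal (Real.exp (c * |x|))
        ≤ ENNReal.ofReal (Real.exp (c * x)) + ENNReal.ofReal (Real.exp (-c * x)) := by
      intro x
      rw [← ENNReal.ofReal_add (Real.exp_nonneg _) (Real.exp_nonneg _)]
      refine ENNReal.ofReal_le_ofReal ?_
      rcases abs_cases x with ⟨hx, _⟩ | ⟨hx, _⟩ <;> rw [hx]
      · have := Real.exp_pos (-c * x); linarith
      · have h' : c * -x = -c * x := by ring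
        rw [h']
        have := Real.exp_pos (c * x); linarith
    refine (lintegral_mono hbd).trans ?_
    rw [lintegral_add_left ((measurable_const_mul c).exp.ennreal_ofReal),
      aux_gaussian_mgf c hv0, aux_gaussian_mgf (-c) hv0, neg_sq, ← two_mul]
  rw [step]
  refine le_trans (mul_le_mul_right (Finset.sum_le_sum fun i _ => each i) _) ?_
  rw [Finset.sum_const, Finset.card_univ, Fintype.card_fin, nsmul_eq_mul]
  rw [← ENNReal.ofReal_natCast, ← ENNReal.ofReal_ofNat,
    ← ENNReal.ofReal_mul (by norm_num : (0:ℝ) ≤ 2),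
    ← ENNReal.ofReal_mul (Nat.cast_nonneg m : (0:ℝ) ≤ (m:ℝ)),
    ← ENNReal.ofReal_mul hKm]
  refine ENNReal.ofReal_le_ofReal ?_
  have hm0 : (0:ℝ) < m := by exact_mod_cast hm
  have hexp : K * Real.exp (c ^ 2 * v / 2) ≤ Real.exp ((p * C + c ^ 2 / 2 + 1) * (t - s)) := by
    rw [hKdef, ← Real.exp_add, Real.exp_le_exp, hvr]
    nlinarith [hh.le, hC0, hc0, sq_nonneg c]
  calc K * (m:ℝ)⁻¹ * ((m:ℝ) * (2 * Real.exp (c ^ 2 * v / 2)))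
      = 2 * (K * Real.exp (c ^ 2 * v / 2)) := by field_simp
    _ ≤ 2 * Real.exp ((p * C + c ^ 2 / 2 + 1) * (t - s)) := by linarith [hexp]
end
end

section
/- Let d, m ∈ ℕ with d, m ≥ 1, T > 0, 0 < Δt ≤ T, K > 0, and let A, B_1, …, B_m be real d×d matrices. Let F, g_1, …, g_m : ℝ^d → ℝ^d satisfy ‖F(y) − F(z)‖ ≤ K(1 + ‖y‖^{2r} + ‖z‖^{2r})‖y − z‖ with z = 0, i.e. ‖F(y) − F(0)‖ ≤ K(1 + ‖y‖^{2r})‖y‖ for all y, and ‖g_i(y) − g_i(z)‖ ≤ K‖y − z‖ for all y, z and all i. Let α : (0,∞) × ℝ^d → ℝ satisfy 0 ≤ α(Δt, y) ≤ 1 for all y. Let Y ∈ ℝ^d with ‖Y‖ ≤ 1 and w ∈ ℝ^m with ‖w‖ ≤ 1, and set Y⁺ := S(Δt, w)·( Y + (α(Δt, Y)F(Y) − Σ_{i=1}^m B_i g_i(Y)) Δt + Σ_{i=1}^m g_i(Y) w_i ). Then ‖Y⁺‖ ≤ λ₀, where λ₀ := exp( Σ_{i=1}^m ‖B_i‖ +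 T‖A − (1/2)Σ_{i=1}^m B_i²‖ ) · ( 1 + 2TK + T‖F(0)‖ + TK Σ_{i=1}^m ‖B_i‖ + T‖Σ_{i=1}^m B_i g_i(0)‖ + mK + Σ_{i=1}^m ‖g_i(0)‖ ). -/
noncomputable section

set_option maxHeartbeats 1000000

lemma my_norm_exp_le {E : Type*} [NormedAddCommGroup E] [NormedSpace ℝ E] [CompleteSpace E]
    (x : E →L[ℝ] E) : ‖NormedSpace.exp x‖ ≤ Real.exp ‖x‖ := by
  rw [NormedSpace.exp_eq_tsum ℝ]
  show ‖∑' n : ℕ, ((n.factorial : ℝ))⁻¹ • x ^ n‖ ≤ _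
  have hs1 := NormedSpace.norm_expSeries_summable' (𝕂 := ℝ) x
  have hs2 := Real.summable_pow_div_factorial ‖x‖
  have h1 : ∀ n : ℕ, ‖((n.factorial : ℝ))⁻¹ • x ^ n‖ ≤ ‖x‖ ^ n / n.factorial := by
    intro n
    rw [norm_smul ((n.factorial : ℝ))⁻¹ (x ^ n), norm_inv, Real.norm_natCast, div_eq_inv_mul]
    refine mul_le_mul_of_nonneg_left ?_ (by positivity)
    cases n with
    | zero => simp only [pow_zero]; exact ContinuousLinearMap.norm_id_le
    | succ k => exact norm_pow_le' x k.succ_pos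
  calc ‖∑' n : ℕ, ((n.factorial : ℝ))⁻¹ • x ^ n‖ ≤ ∑' n : ℕ, ‖((n.factorial : ℝ))⁻¹ • x ^ n‖ :=
        norm_tsum_le_tsum_norm hs1
    _ ≤ ∑' n : ℕ, ‖x‖ ^ n / n.factorial := Summable.tsum_le_tsum h1 hs1 hs2
    _ = Real.exp ‖x‖ := by
        rw [Real.exp_eq_exp_ℝ, NormedSpace.exp_eq_tsum_div]

lemma my_coord_le {m : ℕ} (w : EuclideanSpace ℝ (Fin m)) (i : Fin m) : |w i| ≤ ‖w‖ := by
  rw [EuclideanSpace.norm_eq, ← Real.sqrt_sq_eq_abs]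
  refine Real.sqrt_le_sqrt ?_
  have h : w i ^ 2 = ‖w i‖ ^ 2 := by rw [Real.norm_eq_abs, sq_abs]
  rw [h]
  exact Finset.single_le_sum (f := fun j => ‖w j‖ ^ 2) (fun j _ => by positivity)
    (Finset.mem_univ i)


/-- One-step bound for the tamed GBM scheme on the event
`{‖Y‖ ≤ 1, ‖w‖ ≤ 1}`: the next iterate satisfies `‖Y⁺‖ ≤ λ₀` with the explicit constant `λ₀`. -/
theorem tamed_gbm_one_step_bound_small {d m : ℕ} (hd : 1 ≤ d) (hm : 1 ≤ m)
    (T Δt r K : ℝ) (hT : 0 < T) (hΔt : 0 < Δt) (hΔtT : Δt ≤ T) (hr : 0 ≤ r) (hK : 0 < K)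
    (A : EuclideanSpace ℝ (Fin d) →L[ℝ] EuclideanSpace ℝ (Fin d))
    (B : Fin m → (EuclideanSpace ℝ (Fin d) →L[ℝ] EuclideanSpace ℝ (Fin d)))
    (F : EuclideanSpace ℝ (Fin d) → EuclideanSpace ℝ (Fin d))
    (g : Fin m → EuclideanSpace ℝ (Fin d) → EuclideanSpace ℝ (Fin d))
    (hF : ∀ y : EuclideanSpace ℝ (Fin d), ‖F y - F 0‖ ≤ K * (1 + ‖y‖ ^ (2 * r)) * ‖y‖)
    (hg : ∀ i, ∀ y z : EuclideanSpace ℝ (Fin d), ‖g i y - g i z‖ ≤ K * ‖y - z‖)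
    (α : ℝ → EuclideanSpace ℝ (Fin d) → ℝ)
    (hα : ∀ y, 0 ≤ α Δt y ∧ α Δt y ≤ 1)
    (Y : EuclideanSpace ℝ (Fin d)) (hY : ‖Y‖ ≤ 1)
    (w : EuclideanSpace ℝ (Fin m)) (hw : ‖w‖ ≤ 1)
    (lam0 : ℝ)
    (hlam0 : lam0 =
      Real.exp ((∑ i, ‖B i‖) + T * ‖A - (1 / 2 : ℝ) • ∑ i, B i ^ 2‖) *
        (1 + 2 * T * K + T * ‖F 0‖ + T * K * (∑ i, ‖B i‖) + T * ‖∑ i, B i (g i 0)‖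
          + (m : ℝ) * K + ∑ i, ‖g i 0‖)) :
    ‖gbmOp A B Δt (fun i => w i)
        (Y + Δt • (α Δt Y • F Y - ∑ i, B i (g i Y)) + ∑ i, w i • g i Y)‖ ≤ lam0 := by
  have hwi : ∀ i, |w i| ≤ 1 := fun i => (my_coord_le w i).trans hw
  set A0 : EuclideanSpace ℝ (Fin d) →L[ℝ] EuclideanSpace ℝ (Fin d) :=
    A - (1 / 2 : ℝ) • ∑ i, B i ^ 2 with hA0
  set M : EuclideanSpace ℝ (Fin d) →L[ℝ] EuclideanSpace ℝ (Fin d) :=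
    Δt • A0 + ∑ i, w i • B i with hM
  set v : EuclideanSpace ℝ (Fin d) :=
    Y + Δt • (α Δt Y • F Y - ∑ i, B i (g i Y)) + ∑ i, w i • g i Y with hv
  -- norm of M
  have hMnorm : ‖M‖ ≤ (∑ i, ‖B i‖) + T * ‖A0‖ := by
    have h1 : ‖M‖ ≤ ‖Δt • A0‖ + ‖∑ i, w i • B i‖ := norm_add_le _ _
    have h2 : ‖Δt • A0‖ = Δt * ‖A0‖ := by
      rw [norm_smul Δt A0, Real.norm_eq_abs, abs_of_pos hΔt]
    have h3 : ‖∑ i, w i • B i‖ ≤ ∑ i, ‖B i‖ := by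
      refine (norm_sum_le _ _).trans (Finset.sum_le_sum fun i _ => ?_)
      rw [norm_smul (w i) (B i), Real.norm_eq_abs]
      calc |w i| * ‖B i‖ ≤ 1 * ‖B i‖ :=
            mul_le_mul_of_nonneg_right (hwi i) (norm_nonneg _)
        _ = ‖B i‖ := one_mul _
    have h4 : Δt * ‖A0‖ ≤ T * ‖A0‖ :=
      mul_le_mul_of_nonneg_right hΔtT (norm_nonneg _)
    linarith
  have hexp : ‖NormedSpace.exp M‖ ≤ Real.exp ((∑ i, ‖B i‖) + T * ‖A0‖) :=
    (my_norm_exp_le M).trans (Real.exp_le_exp.mpr hMnorm)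
  -- norm of v
  have hFY : ‖F Y‖ ≤ 2 * K + ‖F 0‖ := by
    have hpow : ‖Y‖ ^ (2 * r) ≤ 1 :=
      Real.rpow_le_one (norm_nonneg Y) hY (by linarith)
    have h1 : ‖F Y‖ ≤ ‖F Y - F 0‖ + ‖F 0‖ := by
      calc ‖F Y‖ = ‖F Y - F 0 + F 0‖ := by rw [sub_add_cancel]
        _ ≤ ‖F Y - F 0‖ + ‖F 0‖ := norm_add_le _ _
    have h2 := hF Y
    have hpow0 : (0:ℝ) ≤ ‖Y‖ ^ (2 * r) := Real.rpow_nonneg (norm_nonneg Y) _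
    have h3 : K * (1 + ‖Y‖ ^ (2 * r)) * ‖Y‖ ≤ 2 * K := by
      have hb : (1 + ‖Y‖ ^ (2 * r)) * ‖Y‖ ≤ 2 := by
        nlinarith [norm_nonneg Y, mul_nonneg (sub_nonneg.mpr hY)
          (by linarith : (0:ℝ) ≤ 1 + ‖Y‖ ^ (2 * r))]
      calc K * (1 + ‖Y‖ ^ (2 * r)) * ‖Y‖ = K * ((1 + ‖Y‖ ^ (2 * r)) * ‖Y‖) := by ring
        _ ≤ K * 2 := mul_le_mul_of_nonneg_left hb hK.le
        _ = 2 * K := by ring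
    linarith
  have hαF : ‖α Δt Y • F Y‖ ≤ 2 * K + ‖F 0‖ := by
    rw [norm_smul, Real.norm_eq_abs, abs_of_nonneg (hα Y).1]
    calc α Δt Y * ‖F Y‖ ≤ 1 * ‖F Y‖ :=
          mul_le_mul_of_nonneg_right (hα Y).2 (norm_nonneg _)
      _ = ‖F Y‖ := one_mul _
      _ ≤ 2 * K + ‖F 0‖ := hFY
  have hgi : ∀ i, ‖g i Y - g i 0‖ ≤ K := by
    intro i
    calc ‖g i Y - g i 0‖ ≤ K * ‖Y - 0‖ := hg i Y 0
      _ = K * ‖Y‖ := by rw [sub_zero]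
      _ ≤ K * 1 := mul_le_mul_of_nonneg_left hY hK.le
      _ = K := mul_one _
  have hBg : ‖∑ i, B i (g i Y)‖ ≤ K * (∑ i, ‖B i‖) + ‖∑ i, B i (g i 0)‖ := by
    have hsplit : ∑ i, B i (g i Y) =
        (∑ i, B i (g i Y - g i 0)) + ∑ i, B i (g i 0) := by
      rw [← Finset.sum_add_distrib]
      exact Finset.sum_congr rfl fun i _ => by rw [map_sub, sub_add_cancel]
    rw [hsplit]
    have h1 : ‖∑ i, B i (g i Y - g i 0)‖ ≤ K * (∑ i, ‖B i‖) := by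
      refine (norm_sum_le _ _).trans ?_
      rw [Finset.mul_sum]
      refine Finset.sum_le_sum fun i _ => ?_
      calc ‖B i (g i Y - g i 0)‖ ≤ ‖B i‖ * ‖g i Y - g i 0‖ :=
            (B i).le_opNorm _
        _ ≤ ‖B i‖ * K := mul_le_mul_of_nonneg_left (hgi i) (norm_nonneg _)
        _ = K * ‖B i‖ := mul_comm _ _
    calc ‖(∑ i, B i (g i Y - g i 0)) + ∑ i, B i (g i 0)‖
        ≤ ‖∑ i, B i (g i Y - g i 0)‖ + ‖∑ i, B i (g i 0)‖ := norm_add_le _ _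
      _ ≤ K * (∑ i, ‖B i‖) + ‖∑ i, B i (g i 0)‖ := by linarith
  have hwg : ‖∑ i, w i • g i Y‖ ≤ (m : ℝ) * K + ∑ i, ‖g i 0‖ := by
    have h1 : ∀ i : Fin m, ‖w i • g i Y‖ ≤ K + ‖g i 0‖ := by
      intro i
      rw [norm_smul, Real.norm_eq_abs]
      have h2 : ‖g i Y‖ ≤ K + ‖g i 0‖ := by
        calc ‖g i Y‖ = ‖g i Y - g i 0 + g i 0‖ := by rw [sub_add_cancel]
          _ ≤ ‖g i Y - g i 0‖ + ‖g i 0‖ := norm_add_le _ _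
          _ ≤ K + ‖g i 0‖ := by linarith [hgi i]
      calc |w i| * ‖g i Y‖ ≤ 1 * ‖g i Y‖ :=
            mul_le_mul_of_nonneg_right (hwi i) (norm_nonneg _)
        _ = ‖g i Y‖ := one_mul _
        _ ≤ K + ‖g i 0‖ := h2
    calc ‖∑ i, w i • g i Y‖ ≤ ∑ i, ‖w i • g i Y‖ := norm_sum_le _ _
      _ ≤ ∑ i : Fin m, (K + ‖g i 0‖) := Finset.sum_le_sum fun i _ => h1 i
      _ = (m : ℝ) * K + ∑ i, ‖g i 0‖ := by
          rw [Finset.sum_add_distrib, Finset.sum_const, Finset.card_univ,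
            Fintype.card_fin, nsmul_eq_mul]
  have hmid : ‖Δt • (α Δt Y • F Y - ∑ i, B i (g i Y))‖ ≤
      T * (2 * K + ‖F 0‖ + (K * (∑ i, ‖B i‖) + ‖∑ i, B i (g i 0)‖)) := by
    rw [norm_smul Δt (α Δt Y • F Y - ∑ i, B i (g i Y)), Real.norm_eq_abs, abs_of_pos hΔt]
    have h1 : ‖α Δt Y • F Y - ∑ i, B i (g i Y)‖ ≤
        2 * K + ‖F 0‖ + (K * (∑ i, ‖B i‖) + ‖∑ i, B i (g i 0)‖) := by
      calc ‖α Δt Y • F Y - ∑ i, B i (g i Y)‖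
          ≤ ‖α Δt Y • F Y‖ + ‖∑ i, B i (g i Y)‖ := norm_sub_le _ _
        _ ≤ _ := by linarith
    have h0 : (0:ℝ) ≤ 2 * K + ‖F 0‖ + (K * (∑ i, ‖B i‖) + ‖∑ i, B i (g i 0)‖) := by
      have : (0:ℝ) ≤ ∑ i, ‖B i‖ := Finset.sum_nonneg fun i _ => norm_nonneg _
      positivity
    calc Δt * ‖α Δt Y • F Y - ∑ i, B i (g i Y)‖
        ≤ Δt * (2 * K + ‖F 0‖ + (K * (∑ i, ‖B i‖) + ‖∑ i, B i (g i 0)‖)) :=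
          mul_le_mul_of_nonneg_left h1 hΔt.le
      _ ≤ T * (2 * K + ‖F 0‖ + (K * (∑ i, ‖B i‖) + ‖∑ i, B i (g i 0)‖)) :=
          mul_le_mul_of_nonneg_right hΔtT h0
  have hvnorm : ‖v‖ ≤ 1 + 2 * T * K + T * ‖F 0‖ + T * K * (∑ i, ‖B i‖)
      + T * ‖∑ i, B i (g i 0)‖ + (m : ℝ) * K + ∑ i, ‖g i 0‖ := by
    have h1 : ‖v‖ ≤ ‖Y‖ + ‖Δt • (α Δt Y • F Y - ∑ i, B i (g i Y))‖
        + ‖∑ i, w i • g i Y‖ := norm_add₃_le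
    have h2 := hmid
    have h3 := hwg
    linarith [h1, h2, h3, hY]
  -- combine
  have hgoal : ‖gbmOp A B Δt (fun i => w i) v‖ ≤ lam0 := by
    have heq : gbmOp A B Δt (fun i => w i) = NormedSpace.exp M := by
      rw [gbmOp, hM, hA0]
    rw [heq, hlam0]
    have hC0 : (0:ℝ) ≤ 1 + 2 * T * K + T * ‖F 0‖ + T * K * (∑ i, ‖B i‖)
        + T * ‖∑ i, B i (g i 0)‖ + (m : ℝ) * K + ∑ i, ‖g i 0‖ := (norm_nonneg v).trans hvnorm
    calc ‖(NormedSpace.exp M) v‖ ≤ ‖NormedSpace.exp M‖ * ‖v‖ :=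
          (NormedSpace.exp M).le_opNorm v
      _ ≤ Real.exp ((∑ i, ‖B i‖) + T * ‖A0‖) *
          (1 + 2 * T * K + T * ‖F 0‖ + T * K * (∑ i, ‖B i‖)
            + T * ‖∑ i, B i (g i 0)‖ + (m : ℝ) * K + ∑ i, ‖g i 0‖) :=
          mul_le_mul hexp hvnorm (norm_nonneg v) (Real.exp_pos _).le
  exact hgoal
end
end

section
/- Let d, m, N ∈ ℕ with d, m, N ≥ 1, T > 0, Δt = T/N, r > 0, K > 0, and let A, B_1, …, B_m be real d×d matrices. Let F, g_1, …, g_m : ℝ^d → ℝ^d satisfy: ‖F(y) − F(0)‖ ≤ K(1 + ‖y‖^{2r})‖y‖ for all y; ⟨y − z, F(y) − F(z)⟩ ≤ K‖y − z‖² for all y, z; and ‖g_i(y) − g_i(z)‖ ≤ K‖y − z‖ for all y, z and all i. Let α : (0,∞) × ℝ^d → ℝ satisfy 0 ≤ α(Δt, y) ≤ 1 for all y. Let λ := max{λ₀, λ₁, λ₂, λ₃, λ₄} be the explicit constant in the context. Let Y ∈ ℝ^d with 1 ≤ ‖Y‖ ≤ N^{1/(4r)} and w ∈ ℝ^m, set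 β := ⟨Y, Σ_{i=1}^m g_i(Y) w_i⟩ / ‖Y‖² and Y⁺ := S(Δt, w)·( Y + (α(Δt, Y)F(Y) − Σ_{i=1}^m B_i g_i(Y)) Δt + Σ_{i=1}^m g_i(Y) w_i ). Then ‖Y⁺‖² ≤ ‖S(Δt, w)‖² ‖Y‖² exp( 2λ/N + 2λ‖w‖² + 2β ). -/
open scoped RealInnerProductSpace

set_option maxHeartbeats 1000000

noncomputable section

private lemma key_aux (T a b lam : ℝ) (hT0 : 0 ≤ T) (ha0 : 0 ≤ a) (hb0 : 0 ≤ b)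
    (hlam_ge1 : 1 ≤ lam) (ha4 : a ^ 4 ≤ lam) (hb4 : b ^ 4 ≤ lam)
    (hT4 : (4 * T ^ 2 + 2 * T) ^ 2 ≤ lam) :
    T * (a + b) + T ^ 2 * (a + b) ^ 2 ≤ lam := by
  set s2 : ℝ := Real.sqrt lam with hs2
  have hs2sq : s2 ^ 2 = lam := Real.sq_sqrt (by linarith)
  have hs2ge1 : (1:ℝ) ≤ s2 := by nlinarith [Real.sqrt_nonneg lam]
  set s4 : ℝ := Real.sqrt s2 with hs4
  have hs4sq : s4 ^ 2 = s2 := Real.sq_sqrt (by linarith)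
  have hs4ge1 : (1:ℝ) ≤ s4 := by nlinarith [Real.sqrt_nonneg s2]
  have ha2 : a ^ 2 ≤ s2 := by
    have h := Real.sqrt_le_sqrt ha4
    rwa [show a ^ 4 = (a ^ 2) ^ 2 by ring, Real.sqrt_sq (sq_nonneg a)] at h
  have has4 : a ≤ s4 := by
    have h := Real.sqrt_le_sqrt ha2
    rwa [Real.sqrt_sq ha0] at h
  have hb2 : b ^ 2 ≤ s2 := by
    have h := Real.sqrt_le_sqrt hb4
    rwa [show b ^ 4 = (b ^ 2) ^ 2 by ring, Real.sqrt_sq (sq_nonneg b)] at h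
  have hbs4 : b ≤ s4 := by
    have h := Real.sqrt_le_sqrt hb2
    rwa [Real.sqrt_sq hb0] at h
  have hTs2 : 4 * T ^ 2 + 2 * T ≤ s2 := by
    have h := Real.sqrt_le_sqrt hT4
    rwa [Real.sqrt_sq (by nlinarith)] at h
  have hs42 : s4 ≤ s2 := by nlinarith
  have hc2 : (a + b) ^ 2 ≤ 4 * s2 := by nlinarith
  have h1 : T * (a + b) ≤ 2 * T * s2 := by nlinarith
  have h2 : T ^ 2 * (a + b) ^ 2 ≤ (s2 - 2 * T) * s2 := by nlinarith
  nlinarith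


/-- One-step squared-norm estimate for the tamed GBM scheme on the event
`{1 ≤ ‖Y‖ ≤ N^{1/(4r)}}`:
`‖Y⁺‖² ≤ ‖S(Δt, w)‖² ‖Y‖² exp(2λ/N + 2λ‖w‖² + 2β)`. -/
theorem tamed_gbm_one_step_bound_large {d m N : ℕ} (hd : 1 ≤ d) (hm : 1 ≤ m) (hN : 1 ≤ N)
    (T Δt r K : ℝ) (hT : 0 < T) (hΔt : Δt = T / N) (hr : 0 < r) (hK : 0 < K)
    (A : EuclideanSpace ℝ (Fin d) →L[ℝ] EuclideanSpace ℝ (Fin d))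
    (B : Fin m → (EuclideanSpace ℝ (Fin d) →L[ℝ] EuclideanSpace ℝ (Fin d)))
    (F : EuclideanSpace ℝ (Fin d) → EuclideanSpace ℝ (Fin d))
    (g : Fin m → EuclideanSpace ℝ (Fin d) → EuclideanSpace ℝ (Fin d))
    (hF : ∀ y : EuclideanSpace ℝ (Fin d), ‖F y - F 0‖ ≤ K * (1 + ‖y‖ ^ (2 * r)) * ‖y‖)
    (hFone : ∀ y z : EuclideanSpace ℝ (Fin d), ⟪y - z, F y - F z⟫ ≤ K * ‖y - z‖ ^ 2)
    (hg : ∀ i, ∀ y z : EuclideanSpace ℝ (Fin d), ‖g i y - g i z‖ ≤ K * ‖y - z‖)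
    (α : ℝ → EuclideanSpace ℝ (Fin d) → ℝ)
    (hα : ∀ y, 0 ≤ α Δt y ∧ α Δt y ≤ 1)
    (lam0 lam1 lam2 lam3 lam4 lam : ℝ)
    (hlam0 : lam0 =
      Real.exp ((∑ i, ‖B i‖) + T * ‖A - (1 / 2 : ℝ) • ∑ i, B i ^ 2‖) *
        (1 + 2 * T * K + T * ‖F 0‖ + T * K * (∑ i, ‖B i‖) + T * ‖∑ i, B i (g i 0)‖
          + (m : ℝ) * K + ∑ i, ‖g i 0‖))
    (hlam1 : lam1 = (m : ℝ) * ∑ i, (K + ‖g i 0‖) ^ 2)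
    (hlam2 : lam2 = (2 * K + ‖F 0‖) ^ 4)
    (hlam3 : lam3 = ((∑ i, ‖B i‖ * K) + ‖∑ i, B i (g i 0)‖) ^ 4)
    (hlam4 : lam4 = (4 * T ^ 2 + 2 * T) ^ 2)
    (hlam : lam = max (max (max (max lam0 lam1) lam2) lam3) lam4)
    (Y : EuclideanSpace ℝ (Fin d)) (hY1 : 1 ≤ ‖Y‖) (hY2 : ‖Y‖ ≤ (N : ℝ) ^ ((1 : ℝ) / (4 * r)))
    (w : EuclideanSpace ℝ (Fin m))
    (β : ℝ) (hβ : β = ⟪Y, ∑ i, w i • g i Y⟫ / ‖Y‖ ^ 2) :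
    ‖gbmOp A B Δt (fun i => w i)
        (Y + Δt • (α Δt Y • F Y - ∑ i, B i (g i Y)) + ∑ i, w i • g i Y)‖ ^ 2
      ≤ ‖gbmOp A B Δt (fun i => w i)‖ ^ 2 * ‖Y‖ ^ 2 *
          Real.exp (2 * lam / N + 2 * lam * ‖w‖ ^ 2 + 2 * β) := by
  have hNR : (1 : ℝ) ≤ (N : ℝ) := by exact_mod_cast hN
  have hNpos : (0 : ℝ) < (N : ℝ) := by linarith
  have hΔt0 : 0 ≤ Δt := by rw [hΔt]; positivity
  have hK0 : (0:ℝ) ≤ K := hK.le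
  have hT0 : (0:ℝ) ≤ T := hT.le
  have nBsum : (0:ℝ) ≤ ∑ i, ‖B i‖ := Finset.sum_nonneg fun i _ => norm_nonneg _
  have ngsum : (0:ℝ) ≤ ∑ i, ‖g i 0‖ := Finset.sum_nonneg fun i _ => norm_nonneg _
  have nF0 : (0:ℝ) ≤ ‖F 0‖ := norm_nonneg _
  have nC3 : (0:ℝ) ≤ ‖∑ i, B i (g i 0)‖ := norm_nonneg _
  have nm1 : (1:ℝ) ≤ (m:ℝ) := by exact_mod_cast hm
  set V : EuclideanSpace ℝ (Fin d) := α Δt Y • F Y - ∑ i, B i (g i Y) with hVdef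
  set G : EuclideanSpace ℝ (Fin d) := ∑ i, w i • g i Y with hGdef
  set a : ℝ := 2 * K + ‖F 0‖ with hadef
  set b : ℝ := (∑ i, ‖B i‖) * K + ‖∑ i, B i (g i 0)‖ with hbdef
  have ha0 : 0 ≤ a := by rw [hadef]; linarith
  have hb0 : 0 ≤ b := by
    rw [hbdef]; exact add_nonneg (mul_nonneg nBsum hK0) nC3
  have hY0 : (0:ℝ) < ‖Y‖ := by linarith
  -- lam facts
  have hl0 : lam0 ≤ lam := by rw [hlam]; exact le_max_of_le_left (le_max_of_le_left
    (le_max_of_le_left (le_max_left _ _)))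
  have hl1 : lam1 ≤ lam := by rw [hlam]; exact le_max_of_le_left (le_max_of_le_left
    (le_max_of_le_left (le_max_right _ _)))
  have hl2 : lam2 ≤ lam := by rw [hlam]; exact le_max_of_le_left (le_max_of_le_left
    (le_max_right _ _))
  have hl3 : lam3 ≤ lam := by rw [hlam]; exact le_max_of_le_left (le_max_right _ _)
  have hl4 : lam4 ≤ lam := by rw [hlam]; exact le_max_right _ _
  have hlam_ge1 : (1:ℝ) ≤ lam := by
    refine le_trans ?_ hl0
    rw [hlam0]
    have hE : (0:ℝ) ≤ (∑ i, ‖B i‖) + T * ‖A - (1 / 2 : ℝ) • ∑ i, B i ^ 2‖ :=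
      add_nonneg nBsum (mul_nonneg hT0 (norm_nonneg _))
    have h1 : (1:ℝ) ≤ Real.exp ((∑ i, ‖B i‖) + T * ‖A - (1 / 2 : ℝ) • ∑ i, B i ^ 2‖) :=
      Real.one_le_exp hE
    have h2 : (1:ℝ) ≤ (1 + 2 * T * K + T * ‖F 0‖ + T * K * (∑ i, ‖B i‖) + T * ‖∑ i, B i (g i 0)‖
          + (m : ℝ) * K + ∑ i, ‖g i 0‖) := by
      have e1 : (0:ℝ) ≤ 2 * T * K := by positivity
      have e2 : (0:ℝ) ≤ T * ‖F 0‖ := mul_nonneg hT0 nF0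
      have e3 : (0:ℝ) ≤ T * K * (∑ i, ‖B i‖) := mul_nonneg (mul_nonneg hT0 hK0) nBsum
      have e4 : (0:ℝ) ≤ T * ‖∑ i, B i (g i 0)‖ := mul_nonneg hT0 nC3
      have e5 : (0:ℝ) ≤ (m:ℝ) * K := mul_nonneg (by linarith) hK0
      linarith
    have h12 := mul_le_mul h1 h2 zero_le_one (le_trans zero_le_one h1)
    linarith
  have ha4 : a ^ 4 ≤ lam := by rw [hadef, ← hlam2]; exact hl2
  have hb4 : b ^ 4 ≤ lam := by
    have : lam3 = b ^ 4 := by rw [hlam3, hbdef, Finset.sum_mul]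
    rw [← this]; exact hl3
  have hT4 : (4 * T ^ 2 + 2 * T) ^ 2 ≤ lam := by rw [← hlam4]; exact hl4
  -- key scalar inequality
  have key : T * (a + b) + T ^ 2 * (a + b) ^ 2 ≤ lam :=
    key_aux T a b lam hT0 ha0 hb0 hlam_ge1 ha4 hb4 hT4
  -- bound on inner product ⟪Y, V⟫
  have hFY : ⟪Y, F Y⟫ ≤ K * ‖Y‖ ^ 2 + ‖F 0‖ * ‖Y‖ := by
    have h := hFone Y 0
    simp only [sub_zero] at h
    have h2 : ⟪Y, F Y - F 0⟫ = ⟪Y, F Y⟫ - ⟪Y, F 0⟫ := inner_sub_right _ _ _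
    have h3 : ⟪Y, F 0⟫ ≤ ‖Y‖ * ‖F 0‖ := real_inner_le_norm _ _
    linarith
  have hαFY : α Δt Y * ⟪Y, F Y⟫ ≤ K * ‖Y‖ ^ 2 + ‖F 0‖ * ‖Y‖ := by
    have hR : (0:ℝ) ≤ K * ‖Y‖ ^ 2 + ‖F 0‖ * ‖Y‖ :=
      add_nonneg (mul_nonneg hK0 (sq_nonneg _)) (mul_nonneg nF0 (norm_nonneg _))
    rcases le_total (⟪Y, F Y⟫ : ℝ) 0 with h | h
    · exact le_trans (mul_nonpos_of_nonneg_of_nonpos (hα Y).1 h) hR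
    · calc α Δt Y * ⟪Y, F Y⟫ ≤ 1 * ⟪Y, F Y⟫ := mul_le_mul_of_nonneg_right (hα Y).2 h
        _ = ⟪Y, F Y⟫ := one_mul _
        _ ≤ _ := hFY
  have hBsumb : ‖∑ i, B i (g i Y)‖ ≤ (∑ i, ‖B i‖) * K * ‖Y‖ + ‖∑ i, B i (g i 0)‖ := by
    have hsplit : ∑ i, B i (g i Y) = (∑ i, B i (g i Y - g i 0)) + ∑ i, B i (g i 0) := by
      rw [← Finset.sum_add_distrib]
      refine Finset.sum_congr rfl fun i _ => ?_
      rw [map_sub]; abel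
    rw [hsplit]
    refine le_trans (norm_add_le _ _) ?_
    have h1 : ‖∑ i, B i (g i Y - g i 0)‖ ≤ (∑ i, ‖B i‖) * K * ‖Y‖ := by
      refine le_trans (norm_sum_le _ _) ?_
      rw [Finset.sum_mul, Finset.sum_mul]
      refine Finset.sum_le_sum fun i _ => ?_
      refine le_trans ((B i).le_opNorm _) ?_
      have hgi := hg i Y 0
      simp only [sub_zero] at hgi
      have hBnn : (0:ℝ) ≤ ‖B i‖ := norm_nonneg _
      calc ‖B i‖ * ‖g i Y - g i 0‖ ≤ ‖B i‖ * (K * ‖Y‖) :=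
            mul_le_mul_of_nonneg_left hgi hBnn
        _ = ‖B i‖ * K * ‖Y‖ := by ring
    linarith
  have hYV : ⟪Y, V⟫ ≤ (a + b) * ‖Y‖ ^ 2 := by
    have h1 : ⟪Y, V⟫ = α Δt Y * ⟪Y, F Y⟫ - ⟪Y, ∑ i, B i (g i Y)⟫ := by
      rw [hVdef, inner_sub_right, real_inner_smul_right]
    have h2 : -⟪Y, ∑ i, B i (g i Y)⟫ ≤ ‖Y‖ * ‖∑ i, B i (g i Y)‖ := by
      have e1 := abs_real_inner_le_norm Y (∑ i, B i (g i Y))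
      have e2 := neg_abs_le (⟪Y, ∑ i, B i (g i Y)⟫ : ℝ)
      linarith
    have h3 : ‖Y‖ * ‖∑ i, B i (g i Y)‖ ≤ (∑ i, ‖B i‖) * K * ‖Y‖ ^ 2 + ‖∑ i, B i (g i 0)‖ * ‖Y‖ := by
      calc ‖Y‖ * ‖∑ i, B i (g i Y)‖
          ≤ ‖Y‖ * ((∑ i, ‖B i‖) * K * ‖Y‖ + ‖∑ i, B i (g i 0)‖) :=
            mul_le_mul_of_nonneg_left hBsumb (norm_nonneg Y)
        _ = (∑ i, ‖B i‖) * K * ‖Y‖ ^ 2 + ‖∑ i, B i (g i 0)‖ * ‖Y‖ := by ring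
    have hYsq : ‖Y‖ ≤ ‖Y‖ ^ 2 := le_self_pow₀ hY1 (by norm_num)
    have h4 : ‖F 0‖ * ‖Y‖ ≤ ‖F 0‖ * ‖Y‖ ^ 2 := mul_le_mul_of_nonneg_left hYsq nF0
    have h5 : ‖∑ i, B i (g i 0)‖ * ‖Y‖ ≤ ‖∑ i, B i (g i 0)‖ * ‖Y‖ ^ 2 :=
      mul_le_mul_of_nonneg_left hYsq nC3
    have h6 : 0 ≤ K * ‖Y‖ ^ 2 := mul_nonneg hK0 (sq_nonneg _)
    rw [h1, hadef, hbdef]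
    linarith [hαFY]
  -- bound on ‖V‖
  set sN : ℝ := Real.sqrt N with hsNdef
  have hsNsq : sN ^ 2 = (N:ℝ) := Real.sq_sqrt hNpos.le
  have hsN1 : (1:ℝ) ≤ sN := by
    have h := Real.sqrt_le_sqrt hNR
    rwa [Real.sqrt_one] at h
  have hu2 : ‖Y‖ ^ (2 * r) ≤ sN := by
    have h1 : ‖Y‖ ^ (2 * r) ≤ ((N : ℝ) ^ ((1 : ℝ) / (4 * r))) ^ (2 * r) :=
      Real.rpow_le_rpow (norm_nonneg _) hY2 (by positivity)
    have h2 : ((N : ℝ) ^ ((1 : ℝ) / (4 * r))) ^ (2 * r) = (N : ℝ) ^ ((1 : ℝ) / (4 * r) * (2 * r)) :=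
      (Real.rpow_mul hNpos.le _ _).symm
    have h3 : (1 : ℝ) / (4 * r) * (2 * r) = 1 / 2 := by field_simp; ring
    rw [h2, h3] at h1
    rw [hsNdef, Real.sqrt_eq_rpow]
    exact h1
  have hu1 : (1:ℝ) ≤ ‖Y‖ ^ (2 * r) := by
    have h := Real.rpow_le_rpow_of_exponent_le hY1 (by positivity : (0:ℝ) ≤ 2 * r)
    simpa using h
  have hsNY : (1:ℝ) ≤ sN * ‖Y‖ := by
    have h := mul_le_mul hsN1 hY1 zero_le_one (by linarith)
    linarith
  have hVn : ‖V‖ ≤ (a + b) * sN * ‖Y‖ := by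
    set u : ℝ := ‖Y‖ ^ (2 * r) with hu
    have h1 : ‖V‖ ≤ ‖α Δt Y • F Y‖ + ‖∑ i, B i (g i Y)‖ := norm_sub_le _ _
    have h4 : ‖F Y‖ ≤ K * (1 + u) * ‖Y‖ + ‖F 0‖ := by
      have hFb := hF Y
      have htr : ‖F Y‖ ≤ ‖F Y - F 0‖ + ‖F 0‖ := by
        calc ‖F Y‖ = ‖(F Y - F 0) + F 0‖ := by rw [sub_add_cancel]
          _ ≤ ‖F Y - F 0‖ + ‖F 0‖ := norm_add_le _ _
      linarith
    have h5 : ‖α Δt Y • F Y‖ ≤ K * (1 + u) * ‖Y‖ + ‖F 0‖ := by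
      rw [norm_smul, Real.norm_eq_abs]
      have h3 : |α Δt Y| ≤ 1 := abs_le.2 ⟨by linarith [(hα Y).1], (hα Y).2⟩
      calc |α Δt Y| * ‖F Y‖ ≤ 1 * ‖F Y‖ := mul_le_mul_of_nonneg_right h3 (norm_nonneg _)
        _ = ‖F Y‖ := one_mul _
        _ ≤ K * (1 + u) * ‖Y‖ + ‖F 0‖ := h4
    have t1 : K * (1 + u) * ‖Y‖ ≤ 2 * K * sN * ‖Y‖ := by
      have hu2sN : 1 + u ≤ 2 * sN := by linarith
      calc K * (1 + u) * ‖Y‖ ≤ K * (2 * sN) * ‖Y‖ :=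
            mul_le_mul_of_nonneg_right (mul_le_mul_of_nonneg_left hu2sN hK0) (norm_nonneg _)
        _ = 2 * K * sN * ‖Y‖ := by ring
    have t2 : ‖F 0‖ ≤ ‖F 0‖ * sN * ‖Y‖ := by
      have h := le_mul_of_one_le_right nF0 hsNY
      calc ‖F 0‖ ≤ ‖F 0‖ * (sN * ‖Y‖) := h
        _ = ‖F 0‖ * sN * ‖Y‖ := by ring
    have t3 : (∑ i, ‖B i‖) * K * ‖Y‖ ≤ (∑ i, ‖B i‖) * K * (sN * ‖Y‖) := by
      have hY' : ‖Y‖ ≤ sN * ‖Y‖ := le_mul_of_one_le_left (norm_nonneg _) hsN1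
      exact mul_le_mul_of_nonneg_left hY' (mul_nonneg nBsum hK0)
    have t4 : ‖∑ i, B i (g i 0)‖ ≤ ‖∑ i, B i (g i 0)‖ * (sN * ‖Y‖) :=
      le_mul_of_one_le_right nC3 hsNY
    have hexp : (a + b) * sN * ‖Y‖
        = 2 * K * sN * ‖Y‖ + ‖F 0‖ * sN * ‖Y‖ + (∑ i, ‖B i‖) * K * (sN * ‖Y‖)
          + ‖∑ i, B i (g i 0)‖ * (sN * ‖Y‖) := by rw [hadef, hbdef]; ring
    rw [hexp]
    linarith [hBsumb]
  -- bound on ‖G‖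
  have hgiY : ∀ i, ‖g i Y‖ ≤ (K + ‖g i 0‖) * ‖Y‖ := by
    intro i
    have h := hg i Y 0
    simp only [sub_zero] at h
    have htr : ‖g i Y‖ ≤ ‖g i Y - g i 0‖ + ‖g i 0‖ := by
      calc ‖g i Y‖ = ‖(g i Y - g i 0) + g i 0‖ := by rw [sub_add_cancel]
        _ ≤ ‖g i Y - g i 0‖ + ‖g i 0‖ := norm_add_le _ _
    have h2 : ‖g i 0‖ ≤ ‖g i 0‖ * ‖Y‖ := le_mul_of_one_le_right (norm_nonneg _) hY1
    have h3 : (K + ‖g i 0‖) * ‖Y‖ = K * ‖Y‖ + ‖g i 0‖ * ‖Y‖ := by ring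
    linarith
  have hGn : ‖G‖ ≤ (∑ i, |w i| * (K + ‖g i 0‖)) * ‖Y‖ := by
    rw [hGdef]
    refine le_trans (norm_sum_le _ _) ?_
    rw [Finset.sum_mul]
    refine Finset.sum_le_sum fun i _ => ?_
    rw [norm_smul, Real.norm_eq_abs]
    calc |w i| * ‖g i Y‖ ≤ |w i| * ((K + ‖g i 0‖) * ‖Y‖) :=
          mul_le_mul_of_nonneg_left (hgiY i) (abs_nonneg _)
      _ = |w i| * (K + ‖g i 0‖) * ‖Y‖ := by ring
  have hw2 : ∑ i, |w i| ^ 2 = ‖w‖ ^ 2 := by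
    rw [EuclideanSpace.norm_eq, Real.sq_sqrt (Finset.sum_nonneg fun i _ => sq_nonneg _)]
    refine Finset.sum_congr rfl fun i _ => ?_
    rw [Real.norm_eq_abs]
  have hq2 : (∑ i, |w i| * (K + ‖g i 0‖)) ^ 2 ≤ ‖w‖ ^ 2 * ∑ i, (K + ‖g i 0‖) ^ 2 := by
    have hcs := Finset.sum_mul_sq_le_sq_mul_sq Finset.univ (fun i => |w i|)
      (fun i => K + ‖g i 0‖)
    rw [← hw2]
    exact hcs
  have hSumlam1 : ∑ i, (K + ‖g i 0‖) ^ 2 ≤ lam1 := by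
    rw [hlam1]
    have hs0 : (0:ℝ) ≤ ∑ i, (K + ‖g i 0‖) ^ 2 := Finset.sum_nonneg fun i _ => sq_nonneg _
    exact le_mul_of_one_le_left hs0 nm1
  have hGsq : ‖G‖ ^ 2 ≤ lam1 * (‖w‖ ^ 2 * ‖Y‖ ^ 2) := by
    have h1 : ‖G‖ ^ 2 ≤ ((∑ i, |w i| * (K + ‖g i 0‖)) * ‖Y‖) ^ 2 :=
      pow_le_pow_left₀ (norm_nonneg _) hGn 2
    calc ‖G‖ ^ 2 ≤ ((∑ i, |w i| * (K + ‖g i 0‖)) * ‖Y‖) ^ 2 := h1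
      _ = (∑ i, |w i| * (K + ‖g i 0‖)) ^ 2 * ‖Y‖ ^ 2 := by ring
      _ ≤ (‖w‖ ^ 2 * ∑ i, (K + ‖g i 0‖) ^ 2) * ‖Y‖ ^ 2 :=
          mul_le_mul_of_nonneg_right hq2 (sq_nonneg _)
      _ ≤ (‖w‖ ^ 2 * lam1) * ‖Y‖ ^ 2 :=
          mul_le_mul_of_nonneg_right
            (mul_le_mul_of_nonneg_left hSumlam1 (sq_nonneg _)) (sq_nonneg _)
      _ = lam1 * (‖w‖ ^ 2 * ‖Y‖ ^ 2) := by ring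
  -- expansion of the squared norm
  have hβY : ⟪Y, G⟫ = β * ‖Y‖ ^ 2 := by
    rw [hβ]
    field_simp
  have hZexp : ‖Y + Δt • V + G‖ ^ 2
      = ‖Y‖ ^ 2 + 2 * (Δt * ⟪Y, V⟫ + β * ‖Y‖ ^ 2) + ‖Δt • V + G‖ ^ 2 := by
    rw [add_assoc, norm_add_sq_real, inner_add_right, real_inner_smul_right, hβY]
  have hDsq : ‖Δt • V + G‖ ^ 2 ≤ 2 * (Δt * ‖V‖) ^ 2 + 2 * ‖G‖ ^ 2 := by
    have h := norm_add_le (Δt • V) G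
    have h2 : ‖Δt • V‖ = Δt * ‖V‖ := by
      rw [norm_smul, Real.norm_eq_abs, abs_of_nonneg hΔt0]
    rw [h2] at h
    calc ‖Δt • V + G‖ ^ 2 ≤ (Δt * ‖V‖ + ‖G‖) ^ 2 := pow_le_pow_left₀ (norm_nonneg _) h 2
      _ ≤ 2 * (Δt * ‖V‖) ^ 2 + 2 * ‖G‖ ^ 2 := by linarith [sq_nonneg (Δt * ‖V‖ - ‖G‖)]
  -- quantitative pieces
  have hVsq : (Δt * ‖V‖) ^ 2 ≤ T ^ 2 * (a + b) ^ 2 / N * ‖Y‖ ^ 2 := by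
    have h2 : 0 ≤ Δt * ‖V‖ := mul_nonneg hΔt0 (norm_nonneg _)
    have h1 : Δt * ‖V‖ ≤ T / N * ((a + b) * sN * ‖Y‖) := by
      rw [hΔt]
      exact mul_le_mul_of_nonneg_left hVn (by positivity)
    have h3 : (Δt * ‖V‖) ^ 2 ≤ (T / N * ((a + b) * sN * ‖Y‖)) ^ 2 :=
      pow_le_pow_left₀ h2 h1 2
    have h4 : (T / N * ((a + b) * sN * ‖Y‖)) ^ 2
        = (T / N) ^ 2 * (a + b) ^ 2 * sN ^ 2 * ‖Y‖ ^ 2 := by ring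
    have h5 : (T / N) ^ 2 * (a + b) ^ 2 * sN ^ 2 * ‖Y‖ ^ 2
        = T ^ 2 * (a + b) ^ 2 / N * ‖Y‖ ^ 2 := by
      rw [hsNsq]; field_simp
    rw [h4, h5] at h3
    exact h3
  have hYVΔ : Δt * ⟪Y, V⟫ ≤ T * (a + b) / N * ‖Y‖ ^ 2 := by
    calc Δt * ⟪Y, V⟫ ≤ Δt * ((a + b) * ‖Y‖ ^ 2) := by
          rcases le_total (⟪Y, V⟫ : ℝ) ((a + b) * ‖Y‖ ^ 2) with h | h
          · exact mul_le_mul_of_nonneg_left h hΔt0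
          · exact mul_le_mul_of_nonneg_left (le_antisymm hYV h ▸ le_refl _) hΔt0
      _ = T * (a + b) / N * ‖Y‖ ^ 2 := by rw [hΔt]; ring
  have hYVΔ : Δt * ⟪Y, V⟫ ≤ T * (a + b) / N * ‖Y‖ ^ 2 := by
    calc Δt * ⟪Y, V⟫ ≤ Δt * ((a + b) * ‖Y‖ ^ 2) := mul_le_mul_of_nonneg_left hYV hΔt0
      _ = T * (a + b) / N * ‖Y‖ ^ 2 := by rw [hΔt]; ring
  have hcoef : T * (a + b) / N + T ^ 2 * (a + b) ^ 2 / N ≤ lam / N := by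
    rw [← add_div]
    exact (div_le_div_iff_of_pos_right hNpos).mpr key
  have hcore : ‖Y + Δt • V + G‖ ^ 2
      ≤ ‖Y‖ ^ 2 * (1 + (2 * lam / N + 2 * lam * ‖w‖ ^ 2 + 2 * β)) := by
    rw [hZexp]
    have hc' : T * (a + b) / N * ‖Y‖ ^ 2 + T ^ 2 * (a + b) ^ 2 / N * ‖Y‖ ^ 2
        ≤ lam / N * ‖Y‖ ^ 2 := by
      have h := mul_le_mul_of_nonneg_right hcoef (sq_nonneg ‖Y‖)
      linarith [h]
    have q1 : 2 * (Δt * ⟪Y, V⟫) + 2 * (Δt * ‖V‖) ^ 2 ≤ 2 * (lam / N) * ‖Y‖ ^ 2 := by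
      linarith [hYVΔ, hVsq, hc']
    have q2 : 2 * ‖G‖ ^ 2 ≤ 2 * lam * ‖w‖ ^ 2 * ‖Y‖ ^ 2 := by
      have h := mul_le_mul_of_nonneg_right hl1 (mul_nonneg (sq_nonneg ‖w‖) (sq_nonneg ‖Y‖))
      linarith [hGsq]
    have hrhs : ‖Y‖ ^ 2 * (1 + (2 * lam / N + 2 * lam * ‖w‖ ^ 2 + 2 * β))
        = ‖Y‖ ^ 2 + (2 * (lam / N) * ‖Y‖ ^ 2 + 2 * lam * ‖w‖ ^ 2 * ‖Y‖ ^ 2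
          + 2 * β * ‖Y‖ ^ 2) := by ring
    rw [hrhs]
    linarith [hDsq, q1, q2]
  have hexp1 : 1 + (2 * lam / N + 2 * lam * ‖w‖ ^ 2 + 2 * β)
      ≤ Real.exp (2 * lam / N + 2 * lam * ‖w‖ ^ 2 + 2 * β) := by
    have h := Real.add_one_le_exp (2 * lam / N + 2 * lam * ‖w‖ ^ 2 + 2 * β)
    linarith
  have hZfin : ‖Y + Δt • V + G‖ ^ 2
      ≤ ‖Y‖ ^ 2 * Real.exp (2 * lam / N + 2 * lam * ‖w‖ ^ 2 + 2 * β) :=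
    le_trans hcore (mul_le_mul_of_nonneg_left hexp1 (sq_nonneg _))
  have hS := (gbmOp A B Δt (fun i => w i)).le_opNorm (Y + Δt • V + G)
  calc ‖gbmOp A B Δt (fun i => w i) (Y + Δt • V + G)‖ ^ 2
      ≤ (‖gbmOp A B Δt (fun i => w i)‖ * ‖Y + Δt • V + G‖) ^ 2 :=
        pow_le_pow_left₀ (norm_nonneg _) hS 2
    _ = ‖gbmOp A B Δt (fun i => w i)‖ ^ 2 * ‖Y + Δt • V + G‖ ^ 2 := by ring
    _ ≤ ‖gbmOp A B Δt (fun i => w i)‖ ^ 2 *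
          (‖Y‖ ^ 2 * Real.exp (2 * lam / N + 2 * lam * ‖w‖ ^ 2 + 2 * β)) :=
        mul_le_mul_of_nonneg_left hZfin (sq_nonneg _)
    _ = ‖gbmOp A B Δt (fun i => w i)‖ ^ 2 * ‖Y‖ ^ 2 *
          Real.exp (2 * lam / N + 2 * lam * ‖w‖ ^ 2 + 2 * β) := by ring
end
end

section
/- Let d, m ∈ ℕ with d, m ≥ 1, T > 0, p ≥ 2, K > 0, and let A, B_1, …, B_m be real d×d matrices satisfying A B_i = B_i A and B_i B_j = B_j B_i for all i, j. Let F, g_1, …, g_m : ℝ^d → ℝ^d with ‖g_i(y) − g_i(z)‖ ≤ K‖y − z‖ for all y, z and all i, and let α : (0,∞) × ℝ^d → ℝ satisfy 0 ≤ α(h, y) ≤ 1 and h‖α(h, y)F(y)‖ ≤ 1 for all y and all h > 0. Then there exists a constant C = C(T, p, m, K, ‖A‖, ‖B_1‖,…,‖B_m‖, ‖g_1(0)‖,…,‖g_m(0)‖) > 0 such that for every h ∈ (0, T], every ℝ^d-valued random vector Y on a probability space (Ω, 𝔽, ℙ) with 𝔼[‖Y‖^p] < ∞, and every family ξ_1,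 …, ξ_m of independent real Gaussian random variables with mean 0 and variance h, independent of Y, the random vector Ȳ := S(h, ξ)·( Y + h (α(h, Y)F(Y) − Σ_{i=1}^m B_i g_i(Y)) + Σ_{i=1}^m g_i(Y) ξ_i ) satisfies (𝔼[‖Ȳ‖^p])^{2/p} ≤ C ( 1 + (𝔼[‖Y‖^p])^{2/p} ). -/
open MeasureTheory ProbabilityTheory
open scoped NNReal ENNReal

noncomputable section

section TamedGBMAux
open Real

lemma tg_norm_exp_le {E : Type*} [NormedAddCommGroup E] [NormedSpace ℝ E] [CompleteSpace E]
    (M : E →L[ℝ] E) : ‖NormedSpace.exp M‖ ≤ Real.exp ‖M‖ := by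
  rw [NormedSpace.exp_eq_tsum ℝ]
  have hsum := NormedSpace.norm_expSeries_summable' (𝕂 := ℝ) M
  refine (norm_tsum_le_tsum_norm hsum).trans ?_
  have hb : ∀ n : ℕ, ‖((n.factorial : ℝ))⁻¹ • M ^ n‖ ≤ ‖M‖ ^ n / n.factorial := by
    intro n
    rw [norm_smul ((n.factorial : ℝ))⁻¹ (M ^ n), norm_inv, Real.norm_natCast,
      inv_mul_eq_div]
    gcongr
    rcases Nat.eq_zero_or_pos n with rfl | hn
    · simpa [pow_zero, ContinuousLinearMap.one_def] using
        ContinuousLinearMap.norm_id_le (E := E)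
    · exact norm_pow_le' M hn
  have hRsum : Summable (fun n : ℕ => ‖M‖ ^ n / n.factorial) :=
    Real.summable_pow_div_factorial ‖M‖
  have hval : Real.exp ‖M‖ = ∑' n : ℕ, ‖M‖ ^ n / n.factorial := by
    rw [Real.exp_eq_exp_ℝ, NormedSpace.exp_eq_tsum_div]
  rw [hval]
  exact Summable.tsum_le_tsum hb hsum hRsum

lemma tg_gauss_mgf (t : ℝ) {v : ℝ≥0} (hv : v ≠ 0) :
    ∫⁻ x, ENNReal.ofReal (Real.exp (t * x)) ∂(gaussianReal 0 v) =
      ENNReal.ofReal (Real.exp (t ^ 2 * v / 2)) := by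
  have hv0 : (0 : ℝ) < (v : ℝ) := by positivity
  rw [gaussianReal_of_var_ne_zero 0 hv,
    lintegral_withDensity_eq_lintegral_mul _ (measurable_gaussianPDF 0 v)
      (show Measurable fun x : ℝ => ENNReal.ofReal (rexp (t * x)) by fun_prop)]
  have hpt : ∀ x : ℝ, (gaussianPDF 0 v * fun x => ENNReal.ofReal (rexp (t * x))) x
      = ENNReal.ofReal (rexp (t ^ 2 * v / 2)) * gaussianPDF (t * v) v x := by
    intro x
    have hreal : gaussianPDFReal 0 v x * rexp (t * x)
        = rexp (t ^ 2 * v / 2) * gaussianPDFReal (t * v) v x := by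
      unfold gaussianPDFReal
      have h1 : rexp (-(x - 0) ^ 2 / (2 * v)) * rexp (t * x)
          = rexp (t ^ 2 * v / 2) * rexp (-(x - t * v) ^ 2 / (2 * v)) := by
        rw [← Real.exp_add, ← Real.exp_add]
        congr 1
        field_simp
        ring
      calc (√(2 * π * v))⁻¹ * rexp (-(x - 0) ^ 2 / (2 * v)) * rexp (t * x)
          = (√(2 * π * v))⁻¹ * (rexp (-(x - 0) ^ 2 / (2 * v)) * rexp (t * x)) := by ring
        _ = (√(2 * π * v))⁻¹ * (rexp (t ^ 2 * v / 2) * rexp (-(x - t * v) ^ 2 / (2 * v))) := by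
            rw [h1]
        _ = rexp (t ^ 2 * v / 2) * ((√(2 * π * v))⁻¹ * rexp (-(x - t * v) ^ 2 / (2 * v))) := by
            ring
    simp only [Pi.mul_apply, gaussianPDF,
      ← ENNReal.ofReal_mul (gaussianPDFReal_nonneg 0 v x),
      ← ENNReal.ofReal_mul (Real.exp_nonneg (t ^ 2 * v / 2))]
    rw [hreal]
  rw [lintegral_congr hpt, lintegral_const_mul _ (measurable_gaussianPDF (t * v) v),
    lintegral_gaussianPDF_eq_one (t * v) hv, mul_one]

lemma tg_gauss_abs_exp_bound {t T hvar : ℝ} (ht : 0 ≤ t) (hh : 0 < hvar) (hhT : hvar ≤ T) :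
    ∫⁻ x, ENNReal.ofReal (Real.exp (t * |x|)) ∂(gaussianReal 0 hvar.toNNReal)
      ≤ ENNReal.ofReal (2 * Real.exp (t ^ 2 * T / 2)) := by
  have hv : hvar.toNNReal ≠ 0 := by
    simp only [ne_eq, Real.toNNReal_eq_zero, not_le]
    exact hh
  have hb : ∀ x : ℝ, ENNReal.ofReal (rexp (t * |x|))
      ≤ ENNReal.ofReal (rexp (t * x)) + ENNReal.ofReal (rexp (-t * x)) := by
    intro x
    rcases abs_cases x with ⟨he, _⟩ | ⟨he, _⟩
    · rw [he]; exact le_add_of_nonneg_right (zero_le ..) |>.trans_eq' rfl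
    · rw [he]
      refine le_add_of_nonneg_left (zero_le ..) |>.trans_eq' ?_
      ring_nf
  calc ∫⁻ x, ENNReal.ofReal (rexp (t * |x|)) ∂(gaussianReal 0 hvar.toNNReal)
      ≤ ∫⁻ x, (ENNReal.ofReal (rexp (t * x)) + ENNReal.ofReal (rexp (-t * x)))
          ∂(gaussianReal 0 hvar.toNNReal) := lintegral_mono hb
    _ = ENNReal.ofReal (rexp (t ^ 2 * hvar.toNNReal / 2))
        + ENNReal.ofReal (rexp ((-t) ^ 2 * hvar.toNNReal / 2)) := by
        rw [lintegral_add_left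
          (show Measurable fun x : ℝ => ENNReal.ofReal (rexp (t * x)) by fun_prop),
          tg_gauss_mgf t hv, tg_gauss_mgf (-t) hv]
    _ ≤ ENNReal.ofReal (2 * rexp (t ^ 2 * T / 2)) := by
        rw [neg_sq, Real.coe_toNNReal hvar hh.le]
        have hx : rexp (t ^ 2 * hvar / 2) ≤ rexp (t ^ 2 * T / 2) := by
          apply Real.exp_le_exp.mpr
          have := sq_nonneg t
          nlinarith
        calc ENNReal.ofReal (rexp (t ^ 2 * hvar / 2)) + ENNReal.ofReal (rexp (t ^ 2 * hvar / 2))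
            ≤ ENNReal.ofReal (rexp (t ^ 2 * T / 2)) + ENNReal.ofReal (rexp (t ^ 2 * T / 2)) := by
              gcongr
          _ = ENNReal.ofReal (2 * rexp (t ^ 2 * T / 2)) := by
              rw [← ENNReal.ofReal_add (Real.exp_nonneg _) (Real.exp_nonneg _), two_mul]

set_option maxHeartbeats 1000000 in
lemma tg_key {d m : ℕ} {T K h : ℝ} (hK : 0 < K) (hh : 0 < h) (hhT : h ≤ T)
    (A : EuclideanSpace ℝ (Fin d) →L[ℝ] EuclideanSpace ℝ (Fin d))
    (B : Fin m → (EuclideanSpace ℝ (Fin d) →L[ℝ] EuclideanSpace ℝ (Fin d)))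
    (g : Fin m → EuclideanSpace ℝ (Fin d) → EuclideanSpace ℝ (Fin d))
    (hg : ∀ i, ∀ y z : EuclideanSpace ℝ (Fin d), ‖g i y - g i z‖ ≤ K * ‖y - z‖)
    (u : EuclideanSpace ℝ (Fin d)) (hu : h * ‖u‖ ≤ 1)
    (w : Fin m → ℝ) (y : EuclideanSpace ℝ (Fin d)) :
    ‖gbmOp A B h w (y + h • (u - ∑ i, B i (g i y)) + ∑ i, w i • g i y)‖
      ≤ (1 + (T * (∑ i, ‖B i‖) + 1) * (K + ∑ i, ‖g i 0‖))
        * Real.exp (T * ‖A - (1 / 2 : ℝ) • ∑ i, B i ^ 2‖)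
        * Real.exp (((∑ i, ‖B i‖) + 1) * ∑ i, |w i|) * (1 + ‖y‖) := by
  have hT : 0 < T := hh.trans_le hhT
  set cA := ‖A - (1 / 2 : ℝ) • ∑ i, B i ^ 2‖ with hcAdef
  set cB := ∑ i, ‖B i‖ with hcBdef
  set G0 := ∑ i, ‖g i 0‖ with hG0def
  set s := ∑ i, |w i| with hsdef
  set D := 1 + (T * cB + 1) * (K + G0) with hDdef
  clear_value D s G0 cB cA
  have hcA0 : 0 ≤ cA := hcAdef ▸ norm_nonneg _
  have hcB0 : 0 ≤ cB := hcBdef ▸ Finset.sum_nonneg fun i _ => norm_nonneg _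
  have hG00 : 0 ≤ G0 := hG0def ▸ Finset.sum_nonneg fun i _ => norm_nonneg _
  have hs0 : 0 ≤ s := hsdef ▸ Finset.sum_nonneg fun i _ => abs_nonneg _
  have hy0 : (0:ℝ) ≤ ‖y‖ := norm_nonneg _
  have hD0 : 0 ≤ D := by
    have : 0 ≤ (T * cB + 1) * (K + G0) := by positivity
    linarith
  have hBi : ∀ i, ‖B i‖ ≤ cB := fun i =>
    le_of_le_of_eq (Finset.single_le_sum (fun j _ => norm_nonneg (B j)) (Finset.mem_univ i))
      hcBdef.symm
  have hgy : ∀ i, ‖g i y‖ ≤ K * ‖y‖ + G0 := by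
    intro i
    have h1 : ‖g i y‖ ≤ ‖g i y - g i 0‖ + ‖g i 0‖ := by
      simpa using norm_add_le (g i y - g i 0) (g i 0)
    have h2 : ‖g i y - g i 0‖ ≤ K * ‖y‖ := by simpa using hg i y 0
    have h3 : ‖g i 0‖ ≤ G0 :=
      le_of_le_of_eq (Finset.single_le_sum (fun j _ => norm_nonneg (g j 0)) (Finset.mem_univ i))
        hG0def.symm
    linarith
  have hKG0 : 0 ≤ K * ‖y‖ + G0 := by positivity
  -- operator norm bound
  have hM : ‖h • (A - (1 / 2 : ℝ) • ∑ i, B i ^ 2) + ∑ i, w i • B i‖ ≤ T * cA + cB * s := by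
    refine (norm_add_le _ _).trans ?_
    have h1 : ‖h • (A - (1 / 2 : ℝ) • ∑ i, B i ^ 2)‖ ≤ T * cA := by
      rw [norm_smul h (A - (1 / 2 : ℝ) • ∑ i, B i ^ 2), Real.norm_eq_abs, abs_of_pos hh,
        ← hcAdef]
      exact mul_le_mul_of_nonneg_right hhT hcA0
    have h2 : ‖∑ i, w i • B i‖ ≤ cB * s := by
      refine (norm_sum_le _ _).trans ?_
      have : ∀ i ∈ Finset.univ, ‖w i • B i‖ ≤ |w i| * cB := by
        intro i _
        rw [norm_smul (w i) (B i), Real.norm_eq_abs]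
        exact mul_le_mul_of_nonneg_left (hBi i) (abs_nonneg _)
      refine (Finset.sum_le_sum this).trans ?_
      rw [← Finset.sum_mul, ← hsdef, mul_comm]
    linarith
  have hOp : ‖gbmOp A B h w‖ ≤ Real.exp (T * cA + cB * s) := by
    unfold gbmOp
    exact (tg_norm_exp_le _).trans (Real.exp_le_exp.mpr hM)
  -- argument bound
  have hz : ‖y + h • (u - ∑ i, B i (g i y)) + ∑ i, w i • g i y‖
      ≤ ‖y‖ + 1 + T * cB * (K * ‖y‖ + G0) + s * (K * ‖y‖ + G0) := by
    have t1 : ‖h • (u - ∑ i, B i (g i y))‖ ≤ 1 + T * cB * (K * ‖y‖ + G0) := by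
      rw [norm_smul h (u - ∑ i, B i (g i y)), Real.norm_eq_abs, abs_of_pos hh]
      have hsum : ‖∑ i, B i (g i y)‖ ≤ cB * (K * ‖y‖ + G0) := by
        refine (norm_sum_le _ _).trans ?_
        have : ∀ i ∈ Finset.univ, ‖B i (g i y)‖ ≤ ‖B i‖ * (K * ‖y‖ + G0) := fun i _ =>
          (ContinuousLinearMap.le_opNorm (B i) (g i y)).trans
            (mul_le_mul_of_nonneg_left (hgy i) (norm_nonneg _))
        refine (Finset.sum_le_sum this).trans ?_
        rw [← Finset.sum_mul, ← hcBdef]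
      calc h * ‖u - ∑ i, B i (g i y)‖
          ≤ h * (‖u‖ + ‖∑ i, B i (g i y)‖) :=
            mul_le_mul_of_nonneg_left (norm_sub_le _ _) hh.le
        _ = h * ‖u‖ + h * ‖∑ i, B i (g i y)‖ := by ring
        _ ≤ 1 + T * cB * (K * ‖y‖ + G0) := by
            have : h * ‖∑ i, B i (g i y)‖ ≤ T * (cB * (K * ‖y‖ + G0)) := by
              apply mul_le_mul hhT hsum (norm_nonneg _) hT.le
            nlinarith
    have t2 : ‖∑ i, w i • g i y‖ ≤ s * (K * ‖y‖ + G0) := by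
      refine (norm_sum_le _ _).trans ?_
      have : ∀ i ∈ Finset.univ, ‖w i • g i y‖ ≤ |w i| * (K * ‖y‖ + G0) := by
        intro i _
        rw [norm_smul (w i) (g i y), Real.norm_eq_abs]
        exact mul_le_mul_of_nonneg_left (hgy i) (abs_nonneg _)
      refine (Finset.sum_le_sum this).trans ?_
      rw [← Finset.sum_mul, ← hsdef]
    calc ‖y + h • (u - ∑ i, B i (g i y)) + ∑ i, w i • g i y‖
        ≤ ‖y + h • (u - ∑ i, B i (g i y))‖ + ‖∑ i, w i • g i y‖ := norm_add_le _ _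
      _ ≤ ‖y‖ + ‖h • (u - ∑ i, B i (g i y))‖ + ‖∑ i, w i • g i y‖ := by
          have := norm_add_le y (h • (u - ∑ i, B i (g i y)))
          linarith
      _ ≤ ‖y‖ + 1 + T * cB * (K * ‖y‖ + G0) + s * (K * ‖y‖ + G0) := by linarith
  have harg : ‖y‖ + 1 + T * cB * (K * ‖y‖ + G0) + s * (K * ‖y‖ + G0)
      ≤ D * (1 + s) * (1 + ‖y‖) := by
    have hb1 : (0:ℝ) ≤ (K + G0) * (1 + ‖y‖) := by positivity
    have e1 : K * ‖y‖ + G0 ≤ (K + G0) * (1 + ‖y‖) := by nlinarith [mul_nonneg hG00 hy0]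
    have e2 : T * cB * (K * ‖y‖ + G0) ≤ T * cB * ((K + G0) * (1 + ‖y‖)) :=
      mul_le_mul_of_nonneg_left e1 (by positivity)
    have e3 : s * (K * ‖y‖ + G0) ≤ s * ((K + G0) * (1 + ‖y‖)) :=
      mul_le_mul_of_nonneg_left e1 hs0
    rw [hDdef]
    nlinarith [e2, e3, mul_nonneg hs0 hy0,
      mul_nonneg (mul_nonneg (mul_nonneg hT.le hcB0) hs0) hb1,
      mul_nonneg hs0 hb1, mul_nonneg (mul_nonneg hT.le hcB0) hb1]
  have hstep : Real.exp (cB * s) * (1 + s) ≤ Real.exp ((cB + 1) * s) := by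
    have h1s : 1 + s ≤ Real.exp s := by
      have := Real.add_one_le_exp s; linarith
    rw [add_mul, one_mul, Real.exp_add]
    exact mul_le_mul_of_nonneg_left h1s (Real.exp_nonneg _)
  calc ‖gbmOp A B h w (y + h • (u - ∑ i, B i (g i y)) + ∑ i, w i • g i y)‖
      ≤ ‖gbmOp A B h w‖ * ‖y + h • (u - ∑ i, B i (g i y)) + ∑ i, w i • g i y‖ :=
        ContinuousLinearMap.le_opNorm _ _
    _ ≤ Real.exp (T * cA + cB * s) * (D * (1 + s) * (1 + ‖y‖)) :=
        mul_le_mul hOp (hz.trans harg) (norm_nonneg _) (Real.exp_nonneg _)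
    _ = (D * Real.exp (T * cA) * (1 + ‖y‖)) * (Real.exp (cB * s) * (1 + s)) := by
        rw [Real.exp_add]; ring
    _ ≤ (D * Real.exp (T * cA) * (1 + ‖y‖)) * Real.exp ((cB + 1) * s) := by
        refine mul_le_mul_of_nonneg_left hstep ?_
        positivity
    _ = D * Real.exp (T * cA) * Real.exp ((cB + 1) * s) * (1 + ‖y‖) := by ring

end TamedGBMAux

set_option maxHeartbeats 1000000 in
/-- One-step `Lᵖ`-moment bound for the continuous-time extension of the
tamed GBM scheme: there is a constant `C > 0`, depending only on
`T, p, m, K, ‖A‖, ‖Bᵢ‖, ‖gᵢ(0)‖`, such that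
`(𝔼‖Ȳ‖ᵖ)^{2/p} ≤ C (1 + (𝔼‖Y‖ᵖ)^{2/p})`. -/
theorem tamed_gbm_continuous_extension_moment_bound {d m : ℕ} (hd : 1 ≤ d) (hm : 1 ≤ m)
    (T p K : ℝ) (hT : 0 < T) (hp : 2 ≤ p) (hK : 0 < K)
    (A : EuclideanSpace ℝ (Fin d) →L[ℝ] EuclideanSpace ℝ (Fin d))
    (B : Fin m → (EuclideanSpace ℝ (Fin d) →L[ℝ] EuclideanSpace ℝ (Fin d)))
    (hAB : ∀ i, A * B i = B i * A) (hBB : ∀ i j, B i * B j = B j * B i)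
    (F : EuclideanSpace ℝ (Fin d) → EuclideanSpace ℝ (Fin d))
    (g : Fin m → EuclideanSpace ℝ (Fin d) → EuclideanSpace ℝ (Fin d))
    (hg : ∀ i, ∀ y z : EuclideanSpace ℝ (Fin d), ‖g i y - g i z‖ ≤ K * ‖y - z‖)
    (α : ℝ → EuclideanSpace ℝ (Fin d) → ℝ)
    (hα : ∀ (h : ℝ), 0 < h → ∀ y, 0 ≤ α h y ∧ α h y ≤ 1 ∧ h * ‖α h y • F y‖ ≤ 1) :
    ∃ C : ℝ, 0 < C ∧
      ∀ (h : ℝ), 0 < h → h ≤ T →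
      ∀ (Ω : Type) (mΩ : MeasurableSpace Ω) (P : Measure Ω), IsProbabilityMeasure P →
      ∀ (Y : Ω → EuclideanSpace ℝ (Fin d)), Measurable Y →
        (∫⁻ ω, (‖Y ω‖₊ : ℝ≥0∞) ^ p ∂P ≠ ⊤) →
      ∀ (ξ : Fin m → Ω → ℝ), (∀ i, Measurable (ξ i)) →
        iIndepFun ξ P →
        (∀ i, Measure.map (ξ i) P = gaussianReal 0 h.toNNReal) →
        IndepFun Y (fun ω i => ξ i ω) P →
        (∫⁻ ω, (‖gbmOp A B h (fun i => ξ i ω)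
            (Y ω + h • (α h (Y ω) • F (Y ω) - ∑ i, B i (g i (Y ω)))
              + ∑ i, ξ i ω • g i (Y ω))‖₊ : ℝ≥0∞) ^ p ∂P) ^ (2 / p)
          ≤ ENNReal.ofReal C *
              (1 + (∫⁻ ω, (‖Y ω‖₊ : ℝ≥0∞) ^ p ∂P) ^ (2 / p)) := by
  classical
  have hp0 : (0:ℝ) < p := by linarith
  have hm0 : ((m:ℝ)) ≠ 0 := by positivity
  set cA := ‖A - (1 / 2 : ℝ) • ∑ i, B i ^ 2‖ with hcAdef
  set cB := ∑ i, ‖B i‖ with hcBdef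
  set G0 := ∑ i, ‖g i 0‖ with hG0def
  have hcA0 : 0 ≤ cA := hcAdef ▸ norm_nonneg _
  have hcB0 : 0 ≤ cB := hcBdef ▸ Finset.sum_nonneg fun i _ => norm_nonneg _
  have hG00 : 0 ≤ G0 := hG0def ▸ Finset.sum_nonneg fun i _ => norm_nonneg _
  clear_value G0 cB cA
  set D := 1 + (T * cB + 1) * (K + G0) with hDdef
  have hD0 : 0 < D := by
    have : 0 ≤ (T * cB + 1) * (K + G0) := by positivity
    rw [hDdef]; linarith
  set lam := p * (cB + 1) with hlamdef
  have hlam0 : 0 ≤ lam := by rw [hlamdef]; positivity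
  set a1 := D * Real.exp (T * cA) * 2 with ha1def
  have ha1 : 0 < a1 := by rw [ha1def]; positivity
  set cE := 2 * Real.exp ((m * lam) ^ 2 * T / 2) with hcEdef
  have hcE1 : 1 ≤ cE := by
    have h1 := Real.one_le_exp (by positivity : (0:ℝ) ≤ (m * lam) ^ 2 * T / 2)
    rw [hcEdef]; linarith
  set C0 := a1 ^ p * cE ^ m with hC0def
  have hC0 : 0 < C0 := by
    rw [hC0def]
    exact mul_pos (Real.rpow_pos_of_pos ha1 p) (pow_pos (lt_of_lt_of_le one_pos hcE1) m)
  refine ⟨max 1 C0, lt_of_lt_of_le one_pos (le_max_left _ _), ?_⟩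
  intro h hh hhT Ω mΩ P hP Y hY hYfin ξ hξm hξindep hξmap hindep
  haveI := hP
  set I := ∫⁻ ω, (‖Y ω‖₊ : ℝ≥0∞) ^ p ∂P with hIdef
  -- pointwise bound
  have key2 : ∀ ω, (‖gbmOp A B h (fun i => ξ i ω)
      (Y ω + h • (α h (Y ω) • F (Y ω) - ∑ i, B i (g i (Y ω)))
        + ∑ i, ξ i ω • g i (Y ω))‖₊ : ℝ≥0∞) ^ p
      ≤ ENNReal.ofReal (a1 ^ p) *
          (ENNReal.ofReal (Real.exp (lam * ∑ i, |ξ i ω|)) * (1 + (‖Y ω‖₊ : ℝ≥0∞) ^ p)) := by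
    intro ω
    have hkey := tg_key hK hh hhT A B g hg (α h (Y ω) • F (Y ω)) (hα h hh (Y ω)).2.2
      (fun i => ξ i ω) (Y ω)
    rw [← hcBdef, ← hG0def, ← hcAdef, ← hDdef] at hkey
    set s := ∑ i, |ξ i ω| with hsdef
    have hs0 : 0 ≤ s := hsdef ▸ Finset.sum_nonneg fun i _ => abs_nonneg _
    have h1 : (‖gbmOp A B h (fun i => ξ i ω)
        (Y ω + h • (α h (Y ω) • F (Y ω) - ∑ i, B i (g i (Y ω)))
          + ∑ i, ξ i ω • g i (Y ω))‖₊ : ℝ≥0∞)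
        ≤ ENNReal.ofReal (D * Real.exp (T * cA) * Real.exp ((cB + 1) * s) * (1 + ‖Y ω‖)) := by
      rw [← enorm_eq_nnnorm, ← ofReal_norm]
      exact ENNReal.ofReal_le_ofReal hkey
    have hcsplit : ENNReal.ofReal (1 + ‖Y ω‖) ^ p
        ≤ (2:ℝ≥0∞) ^ p * (1 + (‖Y ω‖₊ : ℝ≥0∞) ^ p) := by
      have hle : ENNReal.ofReal (1 + ‖Y ω‖) ≤ 2 * max 1 ((‖Y ω‖₊ : ℝ≥0∞)) := by
        rw [ENNReal.ofReal_add zero_le_one (norm_nonneg _), ENNReal.ofReal_one,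
          ofReal_norm, enorm_eq_nnnorm, two_mul]
        exact add_le_add (le_max_left _ _) (le_max_right _ _)
      refine (ENNReal.rpow_le_rpow hle hp0.le).trans ?_
      rw [ENNReal.mul_rpow_of_nonneg _ _ hp0.le]
      refine mul_le_mul_right ?_ _
      rcases le_total ((‖Y ω‖₊ : ℝ≥0∞)) 1 with hc | hc
      · rw [max_eq_left hc, ENNReal.one_rpow]
        exact le_add_of_nonneg_right (zero_le ..) |>.trans_eq' rfl
      · rw [max_eq_right hc]
        exact le_add_of_nonneg_left (zero_le ..) |>.trans_eq' rfl
    have hbmid : ENNReal.ofReal (Real.exp ((cB + 1) * s)) ^ p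
        = ENNReal.ofReal (Real.exp (lam * s)) := by
      rw [ENNReal.ofReal_rpow_of_pos (Real.exp_pos _), ← Real.exp_mul]
      congr 1
      rw [hlamdef]; ring
    have hconst : ENNReal.ofReal (D * Real.exp (T * cA)) ^ p * (2:ℝ≥0∞) ^ p
        = ENNReal.ofReal (a1 ^ p) := by
      rw [← ENNReal.ofReal_ofNat 2, ← ENNReal.mul_rpow_of_nonneg _ _ hp0.le,
        ← ENNReal.ofReal_mul (by positivity), ← ha1def,
        ENNReal.ofReal_rpow_of_pos ha1]
    calc (‖gbmOp A B h (fun i => ξ i ω)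
          (Y ω + h • (α h (Y ω) • F (Y ω) - ∑ i, B i (g i (Y ω)))
            + ∑ i, ξ i ω • g i (Y ω))‖₊ : ℝ≥0∞) ^ p
        ≤ ENNReal.ofReal (D * Real.exp (T * cA) * Real.exp ((cB + 1) * s) * (1 + ‖Y ω‖)) ^ p :=
          ENNReal.rpow_le_rpow h1 hp0.le
      _ = ENNReal.ofReal (D * Real.exp (T * cA)) ^ p
            * ENNReal.ofReal (Real.exp ((cB + 1) * s)) ^ p
            * ENNReal.ofReal (1 + ‖Y ω‖) ^ p := by
          rw [ENNReal.ofReal_mul (by positivity), ENNReal.ofReal_mul (by positivity),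
            ENNReal.mul_rpow_of_nonneg _ _ hp0.le, ENNReal.mul_rpow_of_nonneg _ _ hp0.le]
      _ ≤ ENNReal.ofReal (D * Real.exp (T * cA)) ^ p
            * ENNReal.ofReal (Real.exp (lam * s))
            * ((2:ℝ≥0∞) ^ p * (1 + (‖Y ω‖₊ : ℝ≥0∞) ^ p)) := by
          rw [hbmid]
          exact mul_le_mul_right hcsplit _
      _ = (ENNReal.ofReal (D * Real.exp (T * cA)) ^ p * (2:ℝ≥0∞) ^ p)
            * (ENNReal.ofReal (Real.exp (lam * s)) * (1 + (‖Y ω‖₊ : ℝ≥0∞) ^ p)) := by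
          rw [mul_mul_mul_comm]
      _ = ENNReal.ofReal (a1 ^ p) *
            (ENNReal.ofReal (Real.exp (lam * s)) * (1 + (‖Y ω‖₊ : ℝ≥0∞) ^ p)) := by
          rw [hconst]
  -- measurability and independence setup
  set φ : (Fin m → ℝ) → ℝ≥0∞ := fun v => ENNReal.ofReal (Real.exp (lam * ∑ i, |v i|)) with hφdef
  set ψ : EuclideanSpace ℝ (Fin d) → ℝ≥0∞ := fun x => 1 + (‖x‖₊ : ℝ≥0∞) ^ p with hψdef
  have hφm : Measurable φ := by
    rw [hφdef]
    exact (Real.measurable_exp.comp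
      ((Finset.measurable_sum Finset.univ
        (fun i _ => (measurable_pi_apply i).abs)).const_mul lam)).ennreal_ofReal
  have hψm : Measurable ψ := by
    rw [hψdef]
    exact measurable_const.add
      ((measurable_nnnorm.coe_nnreal_ennreal).pow_const p)
  have hξvec : Measurable (fun ω i => ξ i ω) := measurable_pi_lambda _ hξm
  have hIndep2 : IndepFun (ψ ∘ Y) (φ ∘ (fun ω i => ξ i ω)) P := hindep.comp hψm hφm
  -- integral of ψ ∘ Y
  have hψint : ∫⁻ ω, (ψ ∘ Y) ω ∂P = 1 + I := by
    have : ∀ ω, (ψ ∘ Y) ω = (1 : ℝ≥0∞) + (‖Y ω‖₊ : ℝ≥0∞) ^ p := fun ω => by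
      rw [Function.comp_apply, hψdef]
    rw [lintegral_congr this, lintegral_add_left measurable_const, lintegral_one, measure_univ,
      hIdef]
  -- integral of φ ∘ ξvec
  have hφint : ∫⁻ ω, (φ ∘ (fun ω' i => ξ i ω')) ω ∂P ≤ ENNReal.ofReal (cE ^ m) := by
    have hsplit : ∀ ω, (φ ∘ (fun ω' i => ξ i ω')) ω
        = ∏ i : Fin m, (ENNReal.ofReal (Real.exp ((m * lam) * |ξ i ω|))) ^ ((m:ℝ))⁻¹ := by
      intro ω
      rw [Function.comp_apply, hφdef]
      simp only
      have h1 : ∀ i : Fin m,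
          (ENNReal.ofReal (Real.exp ((m * lam) * |ξ i ω|))) ^ ((m:ℝ))⁻¹
            = ENNReal.ofReal (Real.exp (lam * |ξ i ω|)) := by
        intro i
        rw [ENNReal.ofReal_rpow_of_pos (Real.exp_pos _), ← Real.exp_mul]
        congr 2
        field_simp
      rw [Finset.prod_congr rfl (fun i _ => h1 i),
        ← ENNReal.ofReal_prod_of_nonneg (fun i _ => Real.exp_nonneg _), ← Real.exp_sum,
        Finset.mul_sum]
    rw [lintegral_congr hsplit]
    have hmeasi : ∀ i : Fin m,
        Measurable fun ω => ENNReal.ofReal (Real.exp ((m * lam) * |ξ i ω|)) := fun i =>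
      (Real.measurable_exp.comp ((hξm i).abs.const_mul _)).ennreal_ofReal
    refine (ENNReal.lintegral_prod_norm_pow_le Finset.univ
      (fun i _ => (hmeasi i).aemeasurable) (p := fun _ => ((m:ℝ))⁻¹) ?_ (fun i _ => by positivity)).trans ?_
    · rw [Finset.sum_const, Finset.card_univ, Fintype.card_fin, nsmul_eq_mul]
      field_simp
    · have hone : ∀ i : Fin m,
          (∫⁻ ω, ENNReal.ofReal (Real.exp ((m * lam) * |ξ i ω|)) ∂P) ≤ ENNReal.ofReal cE := by
        intro i
        have hfm : Measurable fun x : ℝ => ENNReal.ofReal (Real.exp ((m * lam) * |x|)) := by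
          fun_prop
        rw [← lintegral_map hfm (hξm i), hξmap i, hcEdef]
        exact tg_gauss_abs_exp_bound (by positivity) hh hhT
      calc ∏ i : Fin m, (∫⁻ ω, ENNReal.ofReal (Real.exp ((m * lam) * |ξ i ω|)) ∂P) ^ ((m:ℝ))⁻¹
          ≤ ∏ _i : Fin m, (ENNReal.ofReal cE) ^ ((m:ℝ))⁻¹ :=
            Finset.prod_le_prod' fun i _ => ENNReal.rpow_le_rpow (hone i) (by positivity)
        _ ≤ ∏ _i : Fin m, ENNReal.ofReal cE := by
            refine Finset.prod_le_prod' fun i _ => ?_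
            calc (ENNReal.ofReal cE) ^ ((m:ℝ))⁻¹
                ≤ (ENNReal.ofReal cE) ^ (1:ℝ) := by
                  refine ENNReal.rpow_le_rpow_of_exponent_le
                    (ENNReal.one_le_ofReal.mpr hcE1) ?_
                  rw [inv_le_one_iff₀]
                  right
                  exact_mod_cast hm
              _ = ENNReal.ofReal cE := ENNReal.rpow_one _
        _ = ENNReal.ofReal (cE ^ m) := by
            rw [Finset.prod_const, Finset.card_univ, Fintype.card_fin,
              ENNReal.ofReal_pow (by linarith : (0:ℝ) ≤ cE)]
  -- main integral bound
  have hbound : (∫⁻ ω, (‖gbmOp A B h (fun i => ξ i ω)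
        (Y ω + h • (α h (Y ω) • F (Y ω) - ∑ i, B i (g i (Y ω)))
          + ∑ i, ξ i ω • g i (Y ω))‖₊ : ℝ≥0∞) ^ p ∂P)
      ≤ ENNReal.ofReal C0 * (1 + I) := by
    calc (∫⁻ ω, (‖gbmOp A B h (fun i => ξ i ω)
          (Y ω + h • (α h (Y ω) • F (Y ω) - ∑ i, B i (g i (Y ω)))
            + ∑ i, ξ i ω • g i (Y ω))‖₊ : ℝ≥0∞) ^ p ∂P)
        ≤ ∫⁻ ω, ENNReal.ofReal (a1 ^ p)
            * ((φ ∘ (fun ω' i => ξ i ω')) ω * (ψ ∘ Y) ω) ∂P := lintegral_mono key2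
      _ = ENNReal.ofReal (a1 ^ p)
            * ∫⁻ ω, (φ ∘ (fun ω' i => ξ i ω')) ω * (ψ ∘ Y) ω ∂P :=
          lintegral_const_mul' _ _ ENNReal.ofReal_ne_top
      _ = ENNReal.ofReal (a1 ^ p)
            * ((∫⁻ ω, (φ ∘ (fun ω' i => ξ i ω')) ω ∂P) * ∫⁻ ω, (ψ ∘ Y) ω ∂P) := by
          rw [lintegral_mul_eq_lintegral_mul_lintegral_of_indepFun''
            ((hφm.comp hξvec).aemeasurable) ((hψm.comp hY).aemeasurable) hIndep2.symm]
      _ ≤ ENNReal.ofReal (a1 ^ p) * (ENNReal.ofReal (cE ^ m) * (1 + I)) := by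
          rw [hψint]
          exact mul_le_mul_right (mul_le_mul_left hφint _) _
      _ = ENNReal.ofReal C0 * (1 + I) := by
          rw [← mul_assoc, ← ENNReal.ofReal_mul (by positivity), ← hC0def]
  -- conclude
  have h2p0 : (0:ℝ) ≤ 2 / p := by positivity
  have h2p1 : 2 / p ≤ 1 := by rw [div_le_one hp0]; exact hp
  refine le_trans (ENNReal.rpow_le_rpow hbound h2p0) ?_
  rw [ENNReal.mul_rpow_of_nonneg _ _ h2p0]
  refine mul_le_mul' ?_ ?_
  · calc (ENNReal.ofReal C0) ^ (2 / p)
        ≤ (ENNReal.ofReal (max 1 C0)) ^ (2 / p) :=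
          ENNReal.rpow_le_rpow (ENNReal.ofReal_le_ofReal (le_max_right _ _)) h2p0
      _ ≤ (ENNReal.ofReal (max 1 C0)) ^ (1:ℝ) :=
          ENNReal.rpow_le_rpow_of_exponent_le (ENNReal.one_le_ofReal.mpr (le_max_left _ _)) h2p1
      _ = ENNReal.ofReal (max 1 C0) := ENNReal.rpow_one _
  · calc (1 + I) ^ (2 / p)
        ≤ 1 ^ (2 / p) + I ^ (2 / p) := ENNReal.rpow_add_le_add_rpow 1 I h2p0 h2p1
      _ = 1 + I ^ (2 / p) := by rw [ENNReal.one_rpow]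
end
end
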